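/- arXiv:1511.08842 — 8 statements merged into one kernel-verified Lean document; each statement's English description precedes it below -/
import Mathlib

section
/- Let n, N be positive integers, let E ∈ ℝ^{n×N}, let d ∈ ℝ^n with ‖d‖₂ = 1, and let λ, L be reals with 0 < λ < L. Define ĉ ∈ ℝ^N entrywise by ĉ_i = min(|(H_λ(Eᵀd))_i|, L) · sign((H_λ(Eᵀd))_i). Then ĉ is a global minimizer of the function c ↦ ‖E − d cᵀ‖_F² + λ² ‖c‖₀ over the set {c ∈ ℝ^N : ‖c‖_∞ ≤ L}. -/
open Finset Matrix

/-- Squared Frobenius norm of a matrix. -/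
noncomputable def frobSq {n N : ℕ} (M : Matrix (Fin n) (Fin N) ℝ) : ℝ :=
  ∑ i, ∑ j, (M i j) ^ 2

/-- ℓ0 "norm": number of nonzero entries of a vector. -/
noncomputable def l0 {N : ℕ} (c : Fin N → ℝ) : ℕ :=
  (Finset.univ.filter (fun i => c i ≠ 0)).card

/-- Rank-one outer product d cᵀ. -/
noncomputable def outer {n N : ℕ} (d : Fin n → ℝ) (c : Fin N → ℝ) :
    Matrix (Fin n) (Fin N) ℝ :=
  Matrix.of fun i j => d i * c j

/-- Hard-thresholding operator. -/
noncomputable def hardThresh {N : ℕ} (lam : ℝ) (b : Fin N → ℝ) : Fin N → ℝ :=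
  fun i => if lam ≤ |b i| then b i else 0

lemma keyA (B lam L u : ℝ) (hlam : 0 < lam) (hL : lam < L) (hB : lam ≤ B)
    (hu0 : 0 ≤ u) (huL : u ≤ L) :
    (min B L)^2 - 2*B*(min B L) ≤ u^2 - 2*B*u := by
  rcases le_total B L with h | h
  · rw [min_eq_left h]; nlinarith [sq_nonneg (u - B)]
  · rw [min_eq_right h]
    nlinarith [mul_nonneg (sub_nonneg.2 huL) (by nlinarith : (0:ℝ) ≤ 2*B - u - L)]

lemma keyB (B lam L : ℝ) (hlam : 0 < lam) (hL : lam < L) (hB : lam ≤ B) :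
    (min B L)^2 - 2*B*(min B L) + lam^2 ≤ 0 := by
  rcases le_total B L with h | h
  · rw [min_eq_left h]; nlinarith
  · rw [min_eq_right h]; nlinarith

lemma key (b lam L t : ℝ) (hlam : 0 < lam) (hL : lam < L) (ht : |t| ≤ L)
    (s : ℝ)
    (hs : s = min |if lam ≤ |b| then b else 0| L * Real.sign (if lam ≤ |b| then b else 0)) :
    s^2 - 2*b*s + lam^2 * (if s = 0 then 0 else 1) ≤
      t^2 - 2*b*t + lam^2 * (if t = 0 then 0 else 1) := by
  have ht' := abs_le.mp ht
  by_cases hb : lam ≤ |b|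
  · rw [if_pos hb] at hs
    have hb0 : b ≠ 0 := by
      intro h; rw [h] at hb; simp at hb; linarith
    have hfacts : |s| = min |b| L ∧ b * s = |b| * min |b| L := by
      rcases lt_trichotomy b 0 with hneg | h0 | hpos
      · rw [Real.sign_of_neg hneg] at hs
        have habs : |b| = -b := abs_of_neg hneg
        constructor
        · rw [hs, abs_mul, abs_neg, abs_one, mul_one, abs_of_nonneg]
          exact le_min (abs_nonneg b) (by linarith)
        · rw [hs]; ring_nf; nlinarith [min_le_left (|b|) L, le_min hb hL.le]
      · exact absurd h0 hb0
      · rw [Real.sign_of_pos hpos] at hs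
        have habs : |b| = b := abs_of_pos hpos
        constructor
        · rw [hs, mul_one, abs_of_nonneg (le_min (abs_nonneg b) (by linarith))]
        · rw [hs, mul_one, habs]
    obtain ⟨habs_s, hbs⟩ := hfacts
    have hmpos : 0 < min |b| L := lt_min (by linarith) (by linarith)
    have hs0 : s ≠ 0 := by
      intro h; rw [h, abs_zero] at habs_s; linarith
    have hs2 : s^2 = (min |b| L)^2 := by
      rw [← sq_abs s, habs_s]
    rw [if_neg hs0, hs2]
    by_cases htz : t = 0
    · subst htz
      simp only [if_pos rfl, mul_zero, add_zero]
      have := keyB (|b|) lam L hlam hL hb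
      norm_num
      nlinarith [hbs]
    · rw [if_neg htz]
      have h1 := keyA (|b|) lam L (|t|) hlam hL hb (abs_nonneg t) ht
      have h2 : b * t ≤ |b| * |t| := by
        calc b * t ≤ |b * t| := le_abs_self _
        _ = |b| * |t| := abs_mul b t
      have h3 : t^2 = |t|^2 := (sq_abs t).symm
      nlinarith [hbs]
  · rw [if_neg hb] at hs
    simp only [abs_zero, Real.sign_zero, mul_zero] at hs
    subst hs
    simp only [if_pos rfl]
    have hblam : |b| < lam := not_le.mp hb
    have hb' := abs_lt.mp hblam
    by_cases htz : t = 0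
    · subst htz; simp
    · rw [if_neg htz]
      norm_num
      nlinarith [sq_nonneg (t - b)]

lemma expand {n N : ℕ} (E : Matrix (Fin n) (Fin N) ℝ) (d : Fin n → ℝ)
    (hd1 : ∑ i, (d i)^2 = 1) (c : Fin N → ℝ) :
    frobSq (E - outer d c) =
      frobSq E + ∑ j, ((c j)^2 - 2 * (Eᵀ.mulVec d j) * c j) := by
  unfold frobSq outer
  simp only [Matrix.sub_apply, Matrix.of_apply, Matrix.mulVec, Matrix.transpose_apply,
    dotProduct]
  have h1 : ∀ i j, (E i j - d i * c j)^2
      = (E i j)^2 + ((d i)^2 * (c j)^2 - 2 * (E i j * d i * c j)) := by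
    intros; ring
  simp_rw [h1, Finset.sum_add_distrib, Finset.sum_sub_distrib]
  have h2 : ∑ i, ∑ j, (d i)^2 * (c j)^2 = ∑ j, (c j)^2 := by
    rw [← Finset.sum_mul_sum, hd1, one_mul]
  have h3 : ∑ i, ∑ j, 2 * (E i j * d i * c j)
      = ∑ j, 2 * (∑ i, E i j * d i) * c j := by
    rw [Finset.sum_comm]
    congr 1
    ext j
    rw [Finset.mul_sum, Finset.sum_mul]
    congr 1; ext i; ring
  rw [h2, h3]

lemma l0_sum {N : ℕ} (c : Fin N → ℝ) :
    (l0 c : ℝ) = ∑ j, (if c j = 0 then 0 else 1) := by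
  unfold l0
  rw [Finset.card_filter]
  push_cast
  congr 1; ext j
  by_cases h : c j = 0 <;> simp [h]

theorem stmt0 {n N : ℕ} (hn : 0 < n) (hN : 0 < N)
    (E : Matrix (Fin n) (Fin N) ℝ) (d : Fin n → ℝ)
    (hd : Real.sqrt (∑ i, (d i) ^ 2) = 1)
    (lam L : ℝ) (hlam : 0 < lam) (hL : lam < L)
    (chat : Fin N → ℝ)
    (hchat : chat = fun i =>
      min |hardThresh lam (Eᵀ.mulVec d) i| L * Real.sign (hardThresh lam (Eᵀ.mulVec d) i)) :
    (∀ i, |chat i| ≤ L) ∧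
    ∀ c : Fin N → ℝ, (∀ i, |c i| ≤ L) →
      frobSq (E - outer d chat) + lam ^ 2 * (l0 chat : ℝ) ≤
      frobSq (E - outer d c) + lam ^ 2 * (l0 c : ℝ) := by
  have hd1 : ∑ i, (d i)^2 = 1 := by
    have hnn : 0 ≤ ∑ i, (d i)^2 := Finset.sum_nonneg fun i _ => sq_nonneg _
    have h := Real.sq_sqrt hnn
    rw [hd] at h
    nlinarith
  constructor
  · intro i
    rw [hchat]
    simp only
    set H := hardThresh lam (Eᵀ.mulVec d) i with hH
    have h1 : |Real.sign H| ≤ 1 := by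
      rcases lt_trichotomy H 0 with h | h | h
      · rw [Real.sign_of_neg h]; norm_num
      · rw [h, Real.sign_zero]; norm_num
      · rw [Real.sign_of_pos h]; norm_num
    have h0 : 0 ≤ min |H| L := le_min (abs_nonneg _) (by linarith)
    calc |min |H| L * Real.sign H| = min |H| L * |Real.sign H| := by
          rw [abs_mul, abs_of_nonneg h0]
    _ ≤ min |H| L * 1 := mul_le_mul_of_nonneg_left h1 h0
    _ ≤ L := by rw [mul_one]; exact min_le_right _ _
  · intro c hc
    rw [expand E d hd1 chat, expand E d hd1 c, l0_sum, l0_sum,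
      Finset.mul_sum, Finset.mul_sum]
    have key' : ∀ j, (chat j)^2 - 2*(Eᵀ.mulVec d j)*(chat j)
        + lam^2 * (if chat j = 0 then 0 else 1)
        ≤ (c j)^2 - 2*(Eᵀ.mulVec d j)*(c j) + lam^2 * (if c j = 0 then 0 else 1) := by
      intro j
      refine key (Eᵀ.mulVec d j) lam L (c j) hlam hL (hc j) (chat j) ?_
      rw [hchat]
      simp only [hardThresh]
    have hsum := Finset.sum_le_sum (s := Finset.univ) (fun j _ => key' j)
    rw [Finset.sum_add_distrib, Finset.sum_add_distrib] at hsum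
    have e1 : ∀ v : Fin N → ℝ,
        ∑ j, ((v j)^2 - 2*(Eᵀ.mulVec d j)*(v j))
        = ∑ j, ((v j)^2 - 2*(Eᵀ.mulVec d j)*(v j)) := fun _ => rfl
    linarith
end

section
/- Let n, N be positive integers, let E ∈ ℝ^{n×N}, let d ∈ ℝ^n with ‖d‖₂ = 1, and let λ, L be reals with 0 < λ < L. Then the function c ↦ ‖E − d cᵀ‖_F² + λ² ‖c‖₀ has a unique global minimizer over the set {c ∈ ℝ^N : ‖c‖_∞ ≤ L} if and only if the vector Eᵀd has no entry whose absolute value equals λ. -/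
open Finset Matrix

/-- per-coordinate cost -/
noncomputable def gg (lam b t : ℝ) : ℝ := t^2 - 2*b*t + (if t = 0 then 0 else lam^2)

/-- per-coordinate minimizer -/
noncomputable def phi (lam L b : ℝ) : ℝ :=
  if |b| ≤ lam then 0 else if |b| ≤ L then b else if 0 < b then L else -L

lemma phi_abs_le {lam L : ℝ} (hlam : 0 < lam) (hL : lam < L) (b : ℝ) :
    |phi lam L b| ≤ L := by
  have hL0 : 0 < L := hlam.trans hL
  unfold phi
  split_ifs with h1 h2 h3
  · simpa using hL0.le
  · exact h2
  · rw [abs_of_pos hL0]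
  · rw [abs_neg, abs_of_pos hL0]

lemma gg_zero (lam b : ℝ) : gg lam b 0 = 0 := by simp [gg]

lemma gg_ne (lam b t : ℝ) (ht : t ≠ 0) : gg lam b t = t^2 - 2*b*t + lam^2 := by
  simp [gg, ht]

lemma phi_min {lam L : ℝ} (hlam : 0 < lam) (hL : lam < L) (b : ℝ) :
    ∀ t, |t| ≤ L → gg lam (b) (phi lam L b) ≤ gg lam b t := by
  have hL0 : 0 < L := hlam.trans hL
  intro t ht
  obtain ⟨ht1, ht2⟩ := abs_le.mp ht
  unfold phi
  split_ifs with h1 h2 h3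
  · -- |b| ≤ lam : phi = 0
    obtain ⟨hb1, hb2⟩ := abs_le.mp h1
    rw [gg_zero]
    rcases eq_or_ne t 0 with rfl | htne
    · rw [gg_zero]
    · rw [gg_ne _ _ _ htne]; nlinarith [sq_nonneg (t - b)]
  · -- lam < |b| ≤ L : phi = b
    have hbne : b ≠ 0 := by
      intro h; rw [h] at h1; simp at h1; linarith
    have hb2 : lam^2 < b^2 := by
      have := not_le.mp h1
      nlinarith [sq_abs b, abs_nonneg b]
    rw [gg_ne _ _ _ hbne]
    rcases eq_or_ne t 0 with rfl | htne
    · rw [gg_zero]; nlinarith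
    · rw [gg_ne _ _ _ htne]; nlinarith [sq_nonneg (t - b)]
  · -- b > L
    have hbL : L < b := by
      have := not_le.mp h2
      rwa [abs_of_pos h3] at this
    have hLne : L ≠ 0 := hL0.ne'
    rw [gg_ne _ _ _ hLne]
    rcases eq_or_ne t 0 with rfl | htne
    · rw [gg_zero]; nlinarith
    · rw [gg_ne _ _ _ htne]; nlinarith
  · -- b < -L
    have hb0 : b ≤ 0 := le_of_not_gt h3
    have hbL : b < -L := by
      have := not_le.mp h2
      rw [abs_of_nonpos hb0] at this; linarith
    have hLne : -L ≠ 0 := (neg_ne_zero).mpr hL0.ne'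
    rw [gg_ne _ _ _ hLne]
    rcases eq_or_ne t 0 with rfl | htne
    · rw [gg_zero]; nlinarith
    · rw [gg_ne _ _ _ htne]; nlinarith

lemma phi_strict {lam L b : ℝ} (hlam : 0 < lam) (hL : lam < L) (hb : |b| ≠ lam) :
    ∀ t, |t| ≤ L → t ≠ phi lam L b → gg lam b (phi lam L b) < gg lam b t := by
  have hL0 : 0 < L := hlam.trans hL
  intro t ht htne
  obtain ⟨ht1, ht2⟩ := abs_le.mp ht
  unfold phi at htne ⊢
  split_ifs at htne ⊢ with h1 h2 h3
  · -- |b| < lam, phi = 0, t ≠ 0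
    have hblt : |b| < lam := lt_of_le_of_ne h1 hb
    have hb2 : b^2 < lam^2 := by nlinarith [sq_abs b, abs_nonneg b]
    rw [gg_zero, gg_ne _ _ _ htne]
    nlinarith [sq_nonneg (t - b)]
  · -- lam < |b| ≤ L, phi = b, t ≠ b
    have hbne : b ≠ 0 := by
      intro h; rw [h] at h1; simp at h1; linarith
    have hb2 : lam^2 < b^2 := by
      have := not_le.mp h1
      nlinarith [sq_abs b, abs_nonneg b]
    rw [gg_ne _ _ _ hbne]
    rcases eq_or_ne t 0 with rfl | htne0
    · rw [gg_zero]; nlinarith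
    · rw [gg_ne _ _ _ htne0]
      have : 0 < |t - b| := abs_pos.mpr (sub_ne_zero.mpr htne)
      nlinarith [sq_abs (t - b)]
  · -- b > L, phi = L, t ≠ L
    have hbL : L < b := by
      have := not_le.mp h2
      rwa [abs_of_pos h3] at this
    rw [gg_ne _ _ _ hL0.ne']
    rcases eq_or_ne t 0 with rfl | htne0
    · rw [gg_zero]; nlinarith
    · rw [gg_ne _ _ _ htne0]
      have htL : t < L := lt_of_le_of_ne ht2 htne
      nlinarith
  · -- b < -L, phi = -L, t ≠ -L
    have hb0 : b ≤ 0 := le_of_not_gt h3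
    have hbL : b < -L := by
      have := not_le.mp h2
      rw [abs_of_nonpos hb0] at this; linarith
    rw [gg_ne _ _ _ ((neg_ne_zero).mpr hL0.ne')]
    rcases eq_or_ne t 0 with rfl | htne0
    · rw [gg_zero]; nlinarith
    · rw [gg_ne _ _ _ htne0]
      have htL : -L < t := lt_of_le_of_ne (by linarith) (Ne.symm htne)
      nlinarith

lemma obj_eq {n N : ℕ} (E : Matrix (Fin n) (Fin N) ℝ) (d : Fin n → ℝ)
    (hd1 : ∑ i, (d i)^2 = 1) (lam : ℝ) (c : Fin N → ℝ) :
    frobSq (E - outer d c) + lam ^ 2 * (l0 c : ℝ)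
      = frobSq E + ∑ j, gg lam (∑ i, E i j * d i) (c j) := by
  have hl0 : lam ^ 2 * (l0 c : ℝ) = ∑ j, (if c j = 0 then 0 else lam^2) := by
    unfold l0
    rw [Finset.card_filter]
    push_cast
    rw [Finset.mul_sum]
    refine Finset.sum_congr rfl fun j _ => ?_
    by_cases h : c j = 0 <;> simp [h]
  have h2 : ∑ j, gg lam (∑ i, E i j * d i) (c j)
      = ∑ j, (∑ i, (d i^2 * c j^2 - 2 * (E i j * d i) * c j))
        + ∑ j, (if c j = 0 then 0 else lam^2) := by
    rw [← Finset.sum_add_distrib]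
    refine Finset.sum_congr rfl fun j _ => ?_
    have hsum : ∑ i, (d i^2 * c j^2 - 2 * (E i j * d i) * c j)
        = (∑ i, d i^2) * c j^2 - 2 * (∑ i, E i j * d i) * c j := by
      rw [Finset.sum_sub_distrib, ← Finset.sum_mul]
      congr 1
      rw [Finset.mul_sum, Finset.sum_mul]
    rw [hsum, hd1]
    unfold gg
    ring
  have h3 : frobSq (E - outer d c)
      = frobSq E + ∑ i, ∑ j, (d i^2 * c j^2 - 2 * (E i j * d i) * c j) := by
    unfold frobSq
    rw [← Finset.sum_add_distrib]
    refine Finset.sum_congr rfl fun i _ => ?_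
    rw [← Finset.sum_add_distrib]
    refine Finset.sum_congr rfl fun j _ => ?_
    simp only [Matrix.sub_apply, outer, Matrix.of_apply]
    ring
  rw [h3, h2, hl0, Finset.sum_comm]
  ring

lemma min_iff_coord {N : ℕ} (L : ℝ) (G : Fin N → ℝ → ℝ) (c : Fin N → ℝ)
    (hc : ∀ j, |c j| ≤ L)
    (hmin : ∀ c' : Fin N → ℝ, (∀ j, |c' j| ≤ L) →
      ∑ j, G j (c j) ≤ ∑ j, G j (c' j)) :
    ∀ j, ∀ t, |t| ≤ L → G j (c j) ≤ G j t := by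
  intro j t ht
  have hfeas : ∀ j', |Function.update c j t j'| ≤ L := by
    intro j'
    rcases eq_or_ne j' j with rfl | h
    · rwa [Function.update_self]
    · rw [Function.update_of_ne h]; exact hc j'
  have h := hmin _ hfeas
  have hsplit : ∀ (f : Fin N → ℝ), ∑ j', f j' = f j + ∑ j' ∈ Finset.univ.erase j, f j' :=
    fun f => (Finset.add_sum_erase _ f (Finset.mem_univ j)).symm
  rw [hsplit (fun j' => G j' (c j')), hsplit (fun j' => G j' (Function.update c j t j'))] at h
  simp only [Function.update_self] at h
  have herase : ∑ j' ∈ Finset.univ.erase j, G j' (Function.update c j t j')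
      = ∑ j' ∈ Finset.univ.erase j, G j' (c j') := by
    refine Finset.sum_congr rfl fun j' hj' => ?_
    rw [Function.update_of_ne (Finset.ne_of_mem_erase hj')]
  rw [herase] at h
  linarith

theorem stmt1 {n N : ℕ} (hn : 0 < n) (hN : 0 < N)
    (E : Matrix (Fin n) (Fin N) ℝ) (d : Fin n → ℝ)
    (hd : Real.sqrt (∑ i, (d i) ^ 2) = 1)
    (lam L : ℝ) (hlam : 0 < lam) (hL : lam < L) :
    (∃! c : Fin N → ℝ, (∀ i, |c i| ≤ L) ∧
        ∀ c' : Fin N → ℝ, (∀ i, |c' i| ≤ L) →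
          frobSq (E - outer d c) + lam ^ 2 * (l0 c : ℝ) ≤
          frobSq (E - outer d c') + lam ^ 2 * (l0 c' : ℝ)) ↔
    (∀ j, |Eᵀ.mulVec d j| ≠ lam) := by
  have hL0 : 0 < L := hlam.trans hL
  have hd1 : ∑ i, (d i)^2 = 1 := Real.sqrt_eq_one.mp hd
  set b : Fin N → ℝ := fun j => ∑ i, E i j * d i with hbdef
  have hbv : ∀ j, Eᵀ.mulVec d j = b j := by
    intro j
    simp [Matrix.mulVec, Matrix.transpose_apply, dotProduct, hbdef]
  -- rewrite objective
  have hobj : ∀ c : Fin N → ℝ,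
      frobSq (E - outer d c) + lam ^ 2 * (l0 c : ℝ)
        = frobSq E + ∑ j, gg lam (b j) (c j) := fun c => obj_eq E d hd1 lam c
  have key : (∃! c : Fin N → ℝ, (∀ i, |c i| ≤ L) ∧
        ∀ c' : Fin N → ℝ, (∀ i, |c' i| ≤ L) →
          frobSq (E - outer d c) + lam ^ 2 * (l0 c : ℝ) ≤
          frobSq (E - outer d c') + lam ^ 2 * (l0 c' : ℝ)) ↔
      (∃! c : Fin N → ℝ, (∀ i, |c i| ≤ L) ∧
        ∀ c' : Fin N → ℝ, (∀ i, |c' i| ≤ L) →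
          ∑ j, gg lam (b j) (c j) ≤ ∑ j, gg lam (b j) (c' j)) := by
    apply existsUnique_congr
    intro c
    constructor
    · rintro ⟨h1, h2⟩
      refine ⟨h1, fun c' hc' => ?_⟩
      have := h2 c' hc'
      rw [hobj c, hobj c'] at this
      linarith
    · rintro ⟨h1, h2⟩
      refine ⟨h1, fun c' hc' => ?_⟩
      rw [hobj c, hobj c']
      have := h2 c' hc'
      linarith
  rw [key]
  constructor
  · -- unique minimizer → no |b j| = lam
    rintro ⟨c, ⟨hcfeas, hcmin⟩, huniq⟩ j hj
    rw [hbv j] at hj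
    -- coordinatewise minimality
    have hcoord := min_iff_coord L (fun j t => gg lam (b j) t) c hcfeas hcmin
    -- the alternative value at coordinate j
    have hbj2 : (b j)^2 = lam^2 := by
      have := sq_abs (b j); rw [hj] at this; linarith
    have hbjne : b j ≠ 0 := by
      intro h; rw [h] at hj; simp at hj; linarith
    have hbjle : |b j| ≤ L := by rw [hj]; exact hL.le
    -- both 0 and b j achieve minimal value 0 at coordinate j
    have hmin0 : ∀ t, |t| ≤ L → (0:ℝ) ≤ gg lam (b j) t := by
      intro t ht
      have := phi_min hlam hL (b j) t ht
      have hphi : phi lam L (b j) = 0 := by unfold phi; rw [if_pos (le_of_eq hj)]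
      rwa [hphi, gg_zero] at this
    have hggb : gg lam (b j) (b j) = 0 := by
      rw [gg_ne _ _ _ hbjne]; nlinarith
    set t' : ℝ := if c j = 0 then b j else 0 with ht'def
    have ht'feas : |t'| ≤ L := by
      rw [ht'def]; split_ifs
      · exact hbjle
      · simpa using hL0.le
    have ht'ne : t' ≠ c j := by
      rw [ht'def]; split_ifs with h
      · rw [h]; exact hbjne
      · exact fun hh => h hh.symm
    have ht'val : gg lam (b j) t' = gg lam (b j) (c j) := by
      have h1 : gg lam (b j) (c j) ≤ gg lam (b j) t' := hcoord j t' ht'feas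
      have h2 : gg lam (b j) t' = 0 := by
        rw [ht'def]; split_ifs
        · exact hggb
        · exact gg_zero _ _
      have h3 : 0 ≤ gg lam (b j) (c j) := hmin0 _ (hcfeas j)
      linarith
    -- build second minimizer
    set c2 : Fin N → ℝ := Function.update c j t' with hc2def
    have hc2feas : ∀ i, |c2 i| ≤ L := by
      intro i
      rcases eq_or_ne i j with rfl | h
      · rw [hc2def]; rw [Function.update_self]; exact ht'feas
      · rw [hc2def, Function.update_of_ne h]; exact hcfeas i
    have hc2min : ∀ c' : Fin N → ℝ, (∀ i, |c' i| ≤ L) →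
        ∑ k, gg lam (b k) (c2 k) ≤ ∑ k, gg lam (b k) (c' k) := by
      intro c' hc'
      have heq : ∑ k, gg lam (b k) (c2 k) = ∑ k, gg lam (b k) (c k) := by
        refine Finset.sum_congr rfl fun k _ => ?_
        rcases eq_or_ne k j with rfl | h
        · rw [hc2def, Function.update_self, ht'val]
        · rw [hc2def, Function.update_of_ne h]
      rw [heq]
      exact hcmin c' hc'
    have := huniq c2 ⟨hc2feas, hc2min⟩
    have : c2 j = c j := by rw [this]
    rw [hc2def, Function.update_self] at this
    exact ht'ne this
  · -- no |b j| = lam → unique minimizer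
    intro hb
    have hb' : ∀ j, |b j| ≠ lam := fun j => by rw [← hbv j]; exact hb j
    refine ⟨fun j => phi lam L (b j), ⟨fun j => phi_abs_le hlam hL (b j), ?_⟩, ?_⟩
    · intro c' hc'
      exact Finset.sum_le_sum fun j _ => phi_min hlam hL (b j) (c' j) (hc' j)
    · rintro c ⟨hcfeas, hcmin⟩
      have hcoord := min_iff_coord L (fun j t => gg lam (b j) t) c hcfeas hcmin
      funext j
      by_contra hne
      have hstrict := phi_strict hlam hL (hb' j) (c j) (hcfeas j) hne
      have hle := hcoord j (phi lam L (b j)) (phi_abs_le hlam hL (b j))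
      linarith
end

section
/- Let λ, L be reals with 0 < λ < L, let b ∈ ℝ with |b| > L, and consider the function φ(c) = (c − b)² + λ² θ(c) on the set {c ∈ ℝ : |c| ≤ L}, where θ(0) = 0 and θ(c) = 1 for c ≠ 0. Then c = L · sign(b) is the unique global minimizer of φ on this set; in particular, b² > (L · sign(b) − b)² + λ². -/
/-- Indicator of nonzero values. -/
noncomputable def theta (a : ℝ) : ℝ := if a = 0 then 0 else 1

theorem stmt5 (lam L : ℝ) (hlam : 0 < lam) (hL : lam < L)
    (b : ℝ) (hb : L < |b|)
    (phi : ℝ → ℝ) (hphi : phi = fun c => (c - b) ^ 2 + lam ^ 2 * theta c) :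
    (|L * Real.sign b| ≤ L ∧
      (∀ c : ℝ, |c| ≤ L → phi (L * Real.sign b) ≤ phi c) ∧
      ∀ c : ℝ, |c| ≤ L → (∀ c' : ℝ, |c'| ≤ L → phi c ≤ phi c') → c = L * Real.sign b) ∧
    b ^ 2 > (L * Real.sign b - b) ^ 2 + lam ^ 2 := by
  have hL0 : 0 < L := hlam.trans hL
  have hLne : L ≠ 0 := ne_of_gt hL0
  subst hphi
  rcases lt_or_ge b 0 with hbneg | hbpos
  · -- b < 0
    have hs : Real.sign b = -1 := Real.sign_of_neg hbneg
    have hbL : b < -L := by rw [abs_of_neg hbneg] at hb; linarith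
    rw [hs]
    have hLe : L * (-1 : ℝ) = -L := by ring
    rw [hLe]
    have hthL : theta (-L) = 1 := by simp [theta, hLne]
    have hkey : (-L - b) ^ 2 + lam ^ 2 < b ^ 2 := by
      nlinarith [mul_pos hL0 (show (0:ℝ) < -L - b by linarith), sq_nonneg (L - lam)]
    refine ⟨⟨?_, ?_, ?_⟩, ?_⟩
    · rw [abs_neg, abs_of_pos hL0]
    · intro c hc
      simp only [hthL]
      rcases eq_or_ne c 0 with rfl | hc0
      · norm_num [theta]
        nlinarith
      · simp only [theta, if_neg hc0]
        rcases abs_le.mp hc with ⟨h1, h2⟩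
        nlinarith
    · intro c hc hmin
      have h := hmin (-L) (by rw [abs_neg, abs_of_pos hL0])
      simp only [hthL] at h
      rcases abs_le.mp hc with ⟨h1, h2⟩
      rcases eq_or_ne c 0 with rfl | hc0
      · norm_num [theta] at h
        nlinarith
      · simp only [theta, if_neg hc0] at h
        have hfac : 0 < c - L - 2 * b := by linarith
        have hprod : (c + L) * (c - L - 2 * b) ≤ 0 := by nlinarith
        have : c ≤ -L := by nlinarith
        linarith
    · exact hkey
  · -- b > 0
    have hb0 : 0 < b := by
      rcases hbpos.lt_or_eq with h | rfl
      · exact h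
      · simp at hb; linarith
    have hs : Real.sign b = 1 := Real.sign_of_pos hb0
    have hbL : L < b := by rwa [abs_of_pos hb0] at hb
    rw [hs, mul_one]
    have hthL : theta L = 1 := by simp [theta, hLne]
    have hkey : (L - b) ^ 2 + lam ^ 2 < b ^ 2 := by
      nlinarith [mul_pos hL0 (show (0:ℝ) < b - L by linarith), sq_nonneg (L - lam)]
    refine ⟨⟨?_, ?_, ?_⟩, ?_⟩
    · rw [abs_of_pos hL0]
    · intro c hc
      simp only [hthL]
      rcases eq_or_ne c 0 with rfl | hc0
      · norm_num [theta]
        nlinarith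
      · simp only [theta, if_neg hc0]
        rcases abs_le.mp hc with ⟨h1, h2⟩
        nlinarith
    · intro c hc hmin
      have h := hmin L (by rw [abs_of_pos hL0])
      simp only [hthL] at h
      rcases abs_le.mp hc with ⟨h1, h2⟩
      rcases eq_or_ne c 0 with rfl | hc0
      · norm_num [theta] at h
        nlinarith
      · simp only [theta, if_neg hc0] at h
        have hfac : c + L - 2 * b < 0 := by linarith
        have hprod : (c - L) * (c + L - 2 * b) ≤ 0 := by nlinarith
        have : L ≤ c := by nlinarith
        linarith
    · exact hkey
end

section
/- Let n, N be positive integers, let E ∈ ℝ^{n×N}, let d̃ ∈ ℝ^n with ‖d̃‖₂ = 1, and let λ > 0, L > 0. Suppose c ∈ ℝ^N is a global minimizer of c' ↦ ‖E − d̃ (c')ᵀ‖_F² + λ² ‖c'‖₀ over the set {c' ∈ ℝ^N : ‖c'‖_∞ ≤ L}. If Ec = 0, then c = 0. -/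
open Finset Matrix

theorem stmt9 {n N : ℕ} (hn : 0 < n) (hN : 0 < N)
    (E : Matrix (Fin n) (Fin N) ℝ) (dtil : Fin n → ℝ)
    (hd : Real.sqrt (∑ i, (dtil i) ^ 2) = 1)
    (lam L : ℝ) (hlam : 0 < lam) (hL : 0 < L)
    (c : Fin N → ℝ) (hcL : ∀ i, |c i| ≤ L)
    (hmin : ∀ c' : Fin N → ℝ, (∀ i, |c' i| ≤ L) →
      frobSq (E - outer dtil c) + lam ^ 2 * (l0 c : ℝ) ≤
      frobSq (E - outer dtil c') + lam ^ 2 * (l0 c' : ℝ))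
    (hEc : E.mulVec c = 0) :
    c = 0 := by
  have hS : ∑ i, (dtil i) ^ 2 = 1 := by
    have := Real.sqrt_eq_one.mp hd
    exact this
  have hrow : ∀ i, ∑ j, E i j * c j = 0 := by
    intro i
    have := congrFun hEc i
    simpa [Matrix.mulVec, dotProduct] using this
  have hexp : frobSq (E - outer dtil c) = frobSq E + ∑ j, (c j) ^ 2 := by
    have key : ∀ i, ∑ j, ((E - outer dtil c) i j) ^ 2 =
        (∑ j, (E i j) ^ 2) - 2 * (dtil i * ∑ j, E i j * c j)
        + (dtil i) ^ 2 * ∑ j, (c j) ^ 2 := by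
      intro i
      rw [Finset.mul_sum, Finset.mul_sum, Finset.mul_sum, ← Finset.sum_sub_distrib,
        ← Finset.sum_add_distrib]
      refine Finset.sum_congr rfl fun j _ => ?_
      simp only [Matrix.sub_apply, outer, Matrix.of_apply]
      ring
    have : frobSq (E - outer dtil c) =
        frobSq E - 2 * ∑ i, dtil i * ∑ j, E i j * c j
        + (∑ i, (dtil i) ^ 2) * ∑ j, (c j) ^ 2 := by
      unfold frobSq
      rw [Finset.mul_sum, Finset.sum_mul, ← Finset.sum_sub_distrib, ← Finset.sum_add_distrib]
      exact Finset.sum_congr rfl fun i _ => key i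
    rw [this, hS]
    simp [hrow]
  have h0 := hmin 0 (fun i => by simp [le_of_lt hL])
  have hout0 : outer dtil (0 : Fin N → ℝ) = 0 := by
    ext i j; simp [outer]
  have hl00 : l0 (0 : Fin N → ℝ) = 0 := by simp [l0]
  rw [hout0, hl00, sub_zero, hexp] at h0
  simp only [Nat.cast_zero, mul_zero, add_zero] at h0
  have hnn1 : (0:ℝ) ≤ ∑ j, (c j) ^ 2 := Finset.sum_nonneg fun j _ => sq_nonneg _
  have hnn2 : (0:ℝ) ≤ lam ^ 2 * (l0 c : ℝ) :=
    mul_nonneg (sq_nonneg _) (Nat.cast_nonneg _)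
  have hzero : ∑ j, (c j) ^ 2 = 0 := by linarith
  funext j
  have := (Finset.sum_eq_zero_iff_of_nonneg (fun j _ => sq_nonneg (c j))).mp hzero j
    (Finset.mem_univ j)
  have := pow_eq_zero_iff (two_ne_zero) |>.mp this
  simpa using this
end

section
/- Let λ > 0, let (c^t)_{t∈ℕ} be a sequence in ℝ^N converging to c* ∈ ℝ^N, and suppose that for every t and every index i, either c^t_i = 0 or |c^t_i| ≥ λ. Then there exists T such that for all t ≥ T, the support of c^t equals the support of c* (i.e., c^t_i = 0 exactly when c*_i = 0); in particular ‖c^t‖₀ = ‖c*‖₀ for all t ≥ T, and hence lim_{t→∞} ‖c^t‖₀ = ‖c*‖₀. -/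
open Filter

theorem stmt10 {N : ℕ} (lam : ℝ) (hlam : 0 < lam)
    (c : ℕ → Fin N → ℝ) (cstar : Fin N → ℝ)
    (hconv : Tendsto c atTop (nhds cstar))
    (hgap : ∀ t i, c t i = 0 ∨ lam ≤ |c t i|) :
    (∃ T : ℕ, ∀ t ≥ T, (∀ i, c t i = 0 ↔ cstar i = 0) ∧ l0 (c t) = l0 cstar) ∧
    Tendsto (fun t => l0 (c t)) atTop (nhds (l0 cstar)) := by
  have hcomp : ∀ i, Tendsto (fun t => c t i) atTop (nhds (cstar i)) := by
    rw [tendsto_pi_nhds] at hconv; exact hconv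
  have key : ∀ᶠ t in atTop, ∀ i, c t i = 0 ↔ cstar i = 0 := by
    rw [eventually_all]
    intro i
    by_cases h : cstar i = 0
    · have habs : Tendsto (fun t => |c t i|) atTop (nhds 0) := by
        have := (hcomp i).abs
        rwa [h, abs_zero] at this
      filter_upwards [habs.eventually_lt_const hlam] with t ht
      rcases hgap t i with h0 | hge
      · simp [h0, h]
      · exact absurd ht (not_lt.2 hge)
    · filter_upwards [(hcomp i).eventually_ne h] with t ht
      simp [ht, h]
  have key2 : ∀ᶠ t in atTop, (∀ i, c t i = 0 ↔ cstar i = 0) ∧ l0 (c t) = l0 cstar := by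
    filter_upwards [key] with t ht
    refine ⟨ht, ?_⟩
    unfold l0
    congr 1
    apply Finset.filter_congr
    intro i _
    simp [not_iff_not.2 (ht i)]
  obtain ⟨T, hT⟩ := eventually_atTop.mp key2
  refine ⟨⟨T, hT⟩, ?_⟩
  apply Tendsto.congr' _ tendsto_const_nhds
  filter_upwards [key2] with t ht
  exact ht.2.symm
end

section
/- Let n, N, J be positive integers, let Y ∈ ℝ^{n×N}, let λ > 0, and define f(C, D) = ‖Y − D Cᵀ‖_F² + λ² ‖C‖₀ for C ∈ ℝ^{N×J} and D ∈ ℝ^{n×J}. Let (C^t, D^t)_{t∈ℕ} be a sequence converging to (C*, D*) such that for every t, every nonzero entry of C^t has absolute value at least λ. Then lim_{t→∞} f(C^t, D^t) = f(C*, D*). -/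
set_option maxHeartbeats 1000000


open Filter Matrix

/-- Number of nonzero entries of a matrix. -/
noncomputable def l0mat {N J : ℕ} (C : Matrix (Fin N) (Fin J) ℝ) : ℕ :=
  (Finset.univ.filter (fun p : Fin N × Fin J => C p.1 p.2 ≠ 0)).card

theorem stmt11 {n N J : ℕ} (hn : 0 < n) (hN : 0 < N) (hJ : 0 < J)
    (Y : Matrix (Fin n) (Fin N) ℝ) (lam : ℝ) (hlam : 0 < lam)
    (f : Matrix (Fin N) (Fin J) ℝ → Matrix (Fin n) (Fin J) ℝ → ℝ)
    (hf : f = fun C D => frobSq (Y - D * Cᵀ) + lam ^ 2 * (l0mat C : ℝ))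
    (C : ℕ → Matrix (Fin N) (Fin J) ℝ) (D : ℕ → Matrix (Fin n) (Fin J) ℝ)
    (Cstar : Matrix (Fin N) (Fin J) ℝ) (Dstar : Matrix (Fin n) (Fin J) ℝ)
    (hconv : Tendsto (fun t => (C t, D t)) atTop (nhds (Cstar, Dstar)))
    (hgap : ∀ t i j, C t i j = 0 ∨ lam ≤ |C t i j|) :
    Tendsto (fun t => f (C t) (D t)) atTop (nhds (f Cstar Dstar)) := by
  subst hf
  have hC : Tendsto C atTop (nhds Cstar) := (continuous_fst.tendsto _).comp hconv
  have hD : Tendsto D atTop (nhds Dstar) := (continuous_snd.tendsto _).comp hconv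
  -- entrywise convergence
  have hentry : ∀ i j, Tendsto (fun t => C t i j) atTop (nhds (Cstar i j)) := fun i j =>
    ((continuous_id.matrix_elem i j).tendsto _).comp hC
  -- eventually the support of C t equals that of Cstar
  have hsupp : ∀ i j, ∀ᶠ t in atTop, (C t i j ≠ 0 ↔ Cstar i j ≠ 0) := by
    intro i j
    have habs : Tendsto (fun t => |C t i j - Cstar i j|) atTop (nhds 0) := by
      have := (hentry i j).sub_const (Cstar i j)
      simpa using this.abs
    by_cases h0 : Cstar i j = 0
    · have hev : ∀ᶠ t in atTop, |C t i j - Cstar i j| < lam :=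
        habs.eventually (eventually_lt_nhds hlam)
      filter_upwards [hev] with t ht
      rw [h0, sub_zero] at ht
      rcases hgap t i j with h | h
      · simp [h, h0]
      · exact absurd ht (not_lt.mpr h)
    · have hpos : 0 < |Cstar i j| := abs_pos.mpr h0
      have hev : ∀ᶠ t in atTop, |C t i j - Cstar i j| < |Cstar i j| :=
        habs.eventually (eventually_lt_nhds hpos)
      filter_upwards [hev] with t ht
      refine ⟨fun _ => h0, fun _ hz => ?_⟩
      rw [hz, zero_sub, abs_neg] at ht
      exact absurd ht (lt_irrefl _)
  have hall : ∀ᶠ t in atTop, ∀ p : Fin N × Fin J, (C t p.1 p.2 ≠ 0 ↔ Cstar p.1 p.2 ≠ 0) := by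
    rw [eventually_all]
    exact fun p => hsupp p.1 p.2
  have hl0 : ∀ᶠ t in atTop, l0mat (C t) = l0mat Cstar := by
    filter_upwards [hall] with t ht
    unfold l0mat
    congr 1
    apply Finset.filter_congr
    intro p _
    simpa using ht p
  have hcont : Tendsto (fun t => frobSq (Y - D t * (C t)ᵀ)) atTop
      (nhds (frobSq (Y - Dstar * Cstarᵀ))) := by
    have : Continuous fun p : Matrix (Fin N) (Fin J) ℝ × Matrix (Fin n) (Fin J) ℝ =>
        frobSq (Y - p.2 * p.1ᵀ) := by
      unfold frobSq
      simp only [Matrix.sub_apply, Matrix.mul_apply, Matrix.transpose_apply]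
      fun_prop
    have h := (this.tendsto (Cstar, Dstar)).comp hconv
    simpa [Function.comp_def] using h
  have : Tendsto (fun t => frobSq (Y - D t * (C t)ᵀ) + lam ^ 2 * (l0mat Cstar : ℝ))
      atTop (nhds (frobSq (Y - Dstar * Cstarᵀ) + lam ^ 2 * (l0mat Cstar : ℝ))) :=
    hcont.add_const _
  refine Tendsto.congr' ?_ this
  filter_upwards [hl0] with t ht
  rw [ht]
end

section
/- Let n, N be positive integers, let Y ∈ ℝ^{n×N}, let λ, L be reals with 0 < λ < L, and define g(c, d) = ‖Y − d cᵀ‖_F² + λ² ‖c‖₀ for c ∈ ℝ^N, d ∈ ℝ^n. Let (c^t, d^t)_{t≥0} be a sequence with ‖d^t‖₂ = 1 and ‖c^t‖_∞ ≤ L for all t, such that for every t ≥ 1: (a) c^t is a global minimizer of c ↦ g(c, d^{t−1}) over {c : ‖c‖_∞ ≤ L}; (b) every nonzero entry of c^t has absolute value at least λ; and (c) d^t is a global minimizer of d ↦ g(c^t, d) over {d : ‖d‖₂ = 1}. Then every accumulation point (c*, d*) of the sequence (c^t, d^t) satisfies: d* is a global minimizer of d ↦ g(c*, d) over {d : ‖d‖₂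 = 1}, and c* is a global minimizer of c ↦ g(c, d*) over {c : ‖c‖_∞ ≤ L}. -/
open Filter Matrix

theorem stmt13 {n N : ℕ} (hn : 0 < n) (hN : 0 < N)
    (Y : Matrix (Fin n) (Fin N) ℝ) (lam L : ℝ) (hlam : 0 < lam) (hL : lam < L)
    (g : (Fin N → ℝ) → (Fin n → ℝ) → ℝ)
    (hg : g = fun c d => frobSq (Y - outer d c) + lam ^ 2 * (l0 c : ℝ))
    (c : ℕ → Fin N → ℝ) (d : ℕ → Fin n → ℝ)
    (hdunit : ∀ t, Real.sqrt (∑ i, (d t i) ^ 2) = 1)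
    (hcL : ∀ t i, |c t i| ≤ L)
    (ha : ∀ t, ∀ c' : Fin N → ℝ, (∀ i, |c' i| ≤ L) →
      g (c (t + 1)) (d t) ≤ g c' (d t))
    (hb : ∀ t i, c (t + 1) i = 0 ∨ lam ≤ |c (t + 1) i|)
    (hc : ∀ t, ∀ d' : Fin n → ℝ, Real.sqrt (∑ i, (d' i) ^ 2) = 1 →
      g (c (t + 1)) (d (t + 1)) ≤ g (c (t + 1)) d')
    (cstar : Fin N → ℝ) (dstar : Fin n → ℝ)
    (hacc : ∃ φ : ℕ → ℕ, StrictMono φ ∧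
      Tendsto (fun k => (c (φ k), d (φ k))) atTop (nhds (cstar, dstar))) :
    (∀ d' : Fin n → ℝ, Real.sqrt (∑ i, (d' i) ^ 2) = 1 →
      g cstar dstar ≤ g cstar d') ∧
    (∀ c' : Fin N → ℝ, (∀ i, |c' i| ≤ L) →
      g cstar dstar ≤ g c' dstar) := by

  obtain ⟨φ, hφ, htend⟩ := hacc
  -- component limits
  have hct : Tendsto (fun k => c (φ k)) atTop (nhds cstar) :=
    (continuous_fst.tendsto _).comp htend
  have hdt : Tendsto (fun k => d (φ k)) atTop (nhds dstar) :=
    (continuous_snd.tendsto _).comp htend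
  -- rewrite of frobenius term
  have hFrw : ∀ (cc : Fin N → ℝ) (dd : Fin n → ℝ),
      frobSq (Y - outer dd cc) = ∑ i, ∑ j, (Y i j - dd i * cc j) ^ 2 := by
    intro cc dd
    simp [frobSq, outer, Matrix.sub_apply]
  have hFcont : Continuous (fun p : (Fin N → ℝ) × (Fin n → ℝ) =>
      ∑ i, ∑ j, (Y i j - p.2 i * p.1 j) ^ 2) := by fun_prop
  -- eventually l0 stabilizes
  have hl0 : ∀ᶠ k in atTop, l0 (c (φ k)) = l0 cstar := by
    have hiff : ∀ᶠ k in atTop, ∀ i, (c (φ k) i ≠ 0 ↔ cstar i ≠ 0) := by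
      rw [eventually_all]
      intro i
      have hti : Tendsto (fun k => c (φ k) i) atTop (nhds (cstar i)) :=
        ((continuous_apply i).tendsto _).comp hct
      by_cases hz : cstar i = 0
      · have hball : ∀ᶠ k in atTop, |c (φ k) i| < lam := by
          have := hti (Metric.ball_mem_nhds (cstar i) hlam)
          simpa [Real.dist_eq, hz] using this
        have hk1 : ∀ᶠ k in atTop, 1 ≤ φ k :=
          eventually_atTop.2 ⟨1, fun k hk => le_trans hk (hφ.le_apply)⟩
        filter_upwards [hball, hk1] with k hb1 hk1
        have heq : φ k - 1 + 1 = φ k := Nat.succ_pred_eq_of_pos hk1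
        have := hb (φ k - 1) i
        rw [heq] at this
        rcases this with h0 | hge
        · simp [h0, hz]
        · exact absurd hb1 (not_lt.2 hge)
      · filter_upwards [hti.eventually_ne hz] with k hk
        simp [hk, hz]
    filter_upwards [hiff] with k hk
    unfold l0
    congr 1
    apply Finset.filter_congr
    intro i _
    simp [hk i]
  -- g values on the subsequence
  have hgdiag : Tendsto (fun k => g (c (φ k)) (d (φ k))) atTop
      (nhds (g cstar dstar)) := by
    have h1 : Tendsto (fun k => (∑ i, ∑ j, (Y i j - d (φ k) i * c (φ k) j) ^ 2)
        + lam ^ 2 * (l0 cstar : ℝ)) atTop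
        (nhds ((∑ i, ∑ j, (Y i j - dstar i * cstar j) ^ 2) + lam ^ 2 * (l0 cstar : ℝ))) :=
      ((hFcont.tendsto _).comp htend).add tendsto_const_nhds
    have h2 : (fun k => (∑ i, ∑ j, (Y i j - d (φ k) i * c (φ k) j) ^ 2)
        + lam ^ 2 * (l0 cstar : ℝ)) =ᶠ[atTop] fun k => g (c (φ k)) (d (φ k)) := by
      filter_upwards [hl0] with k hk
      simp [hg, hFrw, hk]
    have h3 := h1.congr' h2
    have hpt : (∑ i, ∑ j, (Y i j - dstar i * cstar j) ^ 2) + lam ^ 2 * (l0 cstar : ℝ)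
        = g cstar dstar := by simp [hg, hFrw]
    rwa [hpt] at h3
  -- antitone energy
  set a : ℕ → ℝ := fun t => g (c t) (d t) with ha_def
  have hstep : ∀ t, a (t + 1) ≤ a t := fun t =>
    le_trans (hc t (d t) (hdunit t)) (ha t (c t) (hcL t))
  have hanti : Antitone a := antitone_nat_of_succ_le hstep
  have hlb : ∀ t, g cstar dstar ≤ a t := by
    intro t
    refine le_of_tendsto hgdiag ?_
    filter_upwards [eventually_ge_atTop t] with k hk
    exact hanti (le_trans hk hφ.le_apply)
  have hbdd : BddBelow (Set.range a) := ⟨g cstar dstar, by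
    rintro x ⟨t, rfl⟩; exact hlb t⟩
  have haInf : Tendsto a atTop (nhds (⨅ t, a t)) := tendsto_atTop_ciInf hanti hbdd
  have hEq : (⨅ t, a t) = g cstar dstar :=
    tendsto_nhds_unique (haInf.comp hφ.tendsto_atTop) hgdiag
  have haℓ : Tendsto a atTop (nhds (g cstar dstar)) := hEq ▸ haInf
  -- mixed term converges to the same limit
  have hbℓ : Tendsto (fun t => g (c (t + 1)) (d t)) atTop (nhds (g cstar dstar)) := by
    refine tendsto_of_tendsto_of_tendsto_of_le_of_le
      (haℓ.comp (tendsto_add_atTop_nat 1)) haℓ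
      (fun t => hc t (d t) (hdunit t)) (fun t => ha t (c t) (hcL t))
  constructor
  · intro d' hd'
    refine le_of_tendsto_of_tendsto (g := fun k => g (c (φ k)) d') hgdiag ?_ ?_
    · -- RHS tendsto g cstar d'
      have h1 : Tendsto (fun k => (∑ i, ∑ j, (Y i j - d' i * c (φ k) j) ^ 2)
          + lam ^ 2 * (l0 cstar : ℝ)) atTop
          (nhds ((∑ i, ∑ j, (Y i j - d' i * cstar j) ^ 2) + lam ^ 2 * (l0 cstar : ℝ))) := by
        refine Tendsto.add ?_ tendsto_const_nhds
        have : Continuous (fun cc : Fin N → ℝ =>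
            ∑ i, ∑ j, (Y i j - d' i * cc j) ^ 2) := by fun_prop
        exact (this.tendsto _).comp hct
      have h2 : (fun k => (∑ i, ∑ j, (Y i j - d' i * c (φ k) j) ^ 2)
          + lam ^ 2 * (l0 cstar : ℝ)) =ᶠ[atTop] fun k => g (c (φ k)) d' := by
        filter_upwards [hl0] with k hk
        simp [hg, hFrw, hk]
      have h3 := h1.congr' h2
      have hpt : (∑ i, ∑ j, (Y i j - d' i * cstar j) ^ 2) + lam ^ 2 * (l0 cstar : ℝ)
          = g cstar d' := by simp [hg, hFrw]
      rwa [hpt] at h3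
    · -- eventual inequality
      have hk1 : ∀ᶠ k in atTop, 1 ≤ φ k :=
        eventually_atTop.2 ⟨1, fun k hk => le_trans hk (hφ.le_apply)⟩
      filter_upwards [hk1] with k hk
      have heq : φ k - 1 + 1 = φ k := Nat.succ_pred_eq_of_pos hk
      have := hc (φ k - 1) d' hd'
      rw [heq] at this
      exact this
  · intro c' hc'
    have hlhs : Tendsto (fun k => g (c (φ k + 1)) (d (φ k))) atTop
        (nhds (g cstar dstar)) := hbℓ.comp hφ.tendsto_atTop
    have hrhs : Tendsto (fun k => g c' (d (φ k))) atTop (nhds (g c' dstar)) := by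
      have hcont : Continuous (fun dd : Fin n → ℝ =>
          (∑ i, ∑ j, (Y i j - dd i * c' j) ^ 2) + lam ^ 2 * (l0 c' : ℝ)) := by fun_prop
      have h3 := (hcont.tendsto dstar).comp hdt
      have hfun : (fun dd : Fin n → ℝ =>
          (∑ i, ∑ j, (Y i j - dd i * c' j) ^ 2) + lam ^ 2 * (l0 c' : ℝ)) = fun dd => g c' dd := by
        funext dd; simp [hg, hFrw]
      have hpt : (∑ i, ∑ j, (Y i j - dstar i * c' j) ^ 2) + lam ^ 2 * (l0 c' : ℝ)
          = g c' dstar := by simp [hg, hFrw]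
      rw [hfun, hpt] at h3
      exact h3
    refine le_of_tendsto_of_tendsto' hlhs hrhs ?_
    intro k
    exact ha (φ k) c' hc'
end

section
/- Let n, N, J be positive integers, let Y ∈ ℝ^{n×N}, and let λ, L be reals with 0 < λ < L. Define f(C, D) = ‖Y − D Cᵀ‖_F² + λ² Σ_{j=1}^J ‖c_j‖₀, where c_j and d_j denote the j-th columns of C ∈ ℝ^{N×J} and D ∈ ℝ^{n×J}. Consider sequences (c_j^t)_{t≥0} ⊂ ℝ^N and (d_j^t)_{t≥0} ⊂ ℝ^n for j = 1, …, J such that for all t and j: ‖d_j^t‖₂ = 1, ‖c_j^t‖_∞ ≤ L, and every nonzero entry of c_j^t has absolute value at least λ; and such that for every t ≥ 1 and j, with E_j^t := Y − Σ_{k<j} d_k^t (c_k^t)ᵀ − Σ_{k>j} d_k^{t−1} (c_k^{t−1})ᵀ: (a) c_j^t is a global minimizer of c ↦ ‖E_j^t − d_j^{t−1} cᵀ‖_F² + λ² ‖c‖₀ over {c : ‖c‖_∞ ≤ L}, and (b) d_j^t is a global minimizer of d ↦ ‖E_j^t − d (c_j^t)ᵀ‖_F² over {d : ‖d‖₂ =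 1}. Suppose moreover that every accumulation point (C, D) of the sequence (C^t, D^t) is such that for each j, the vector (Y − D Cᵀ + d_j c_jᵀ)ᵀ d_j ∈ ℝ^N has no entry of absolute value exactly λ. Then every accumulation point (C*, D*) of the sequence is coordinatewise globally optimal for f: for each j, the column c*_j is a global minimizer of c ↦ f over {c : ‖c‖_∞ ≤ L} with all other columns of C* and all columns of D* held fixed, and d*_j is a global minimizer of d ↦ f over {d : ‖d‖₂ = 1} with all other variables held fixed at their values in (C*, D*). -/
open Filter Matrix Finset

lemma sum_split {J : ℕ} {M : Type*} [AddCommMonoid M] (g : Fin J → M) (j : Fin J) :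
    ∑ k, g k = (∑ k ∈ univ.filter (fun k => k < j), g k) + g j
      + ∑ k ∈ univ.filter (fun k => j < k), g k := by
  have h : ∀ k : Fin J, g k = (if k < j then g k else 0) + (if k = j then g k else 0)
      + (if j < k then g k else 0) := by
    intro k
    rcases lt_trichotomy k j with h | h | h
    · simp [h, h.ne, asymm h]
    · simp [h, lt_irrefl]
    · simp [h, h.ne', asymm h]
  rw [Finset.sum_congr rfl (fun k _ => h k)]
  simp [Finset.sum_add_distrib, Finset.sum_ite_eq' , Finset.sum_filter]

lemma frobSq_nonneg {n N : ℕ} (M : Matrix (Fin n) (Fin N) ℝ) : 0 ≤ frobSq M := by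
  apply Finset.sum_nonneg; intro i _; apply Finset.sum_nonneg; intro j _; positivity

lemma l0_eq_sum {N : ℕ} (x : Fin N → ℝ) :
    (l0 x : ℝ) = ∑ i, (if x i = 0 then (0:ℝ) else 1) := by
  rw [l0, Finset.card_filter]
  push_cast
  exact Finset.sum_congr rfl (fun i _ => by by_cases h : x i = 0 <;> simp [h])

-- surrogate expansion
lemma frobSq_expand {n N : ℕ} (E : Matrix (Fin n) (Fin N) ℝ) (dd : Fin n → ℝ)
    (cc : Fin N → ℝ) (hd : ∑ i, (dd i)^2 = 1) :
    frobSq (E - outer dd cc) =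
      frobSq E + ∑ i, ((cc i)^2 - 2 * cc i * (Eᵀ.mulVec dd i)) := by
  simp only [frobSq, Matrix.sub_apply, outer, Matrix.of_apply, Matrix.mulVec,
    Matrix.transpose_apply, dotProduct]
  have h1 : ∀ p : Fin n, ∀ i : Fin N,
      (E p i - dd p * cc i)^2 = E p i ^2 + (dd p^2 * cc i^2 - 2 * (cc i * (E p i * dd p))) := by
    intro p i; ring
  rw [Finset.sum_congr rfl (fun p _ => Finset.sum_congr rfl (fun i _ => h1 p i))]
  simp only [Finset.sum_add_distrib, Finset.sum_sub_distrib]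
  congr 1
  congr 1
  · rw [Finset.sum_comm]
    have : ∀ i : Fin N, ∑ p : Fin n, dd p ^ 2 * cc i ^ 2 = cc i ^2 := by
      intro i; rw [← Finset.sum_mul, hd, one_mul]
    rw [Finset.sum_congr rfl (fun i _ => this i)]
  · rw [Finset.sum_comm]
    refine Finset.sum_congr rfl (fun i _ => ?_)
    rw [Finset.mul_sum]
    exact Finset.sum_congr rfl (fun p _ => by ring)

-- scalar surrogate
noncomputable def qf (lam b s : ℝ) : ℝ := s^2 - 2*s*b + lam^2 * (if s = 0 then 0 else 1)

noncomputable def thresh (lam L b : ℝ) : ℝ := if |b| ≤ lam then 0 else max (-L) (min L b)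

lemma thresh_strict (lam L b : ℝ) (hlam : 0 < lam) (hL : lam < L) (hb : |b| ≠ lam) :
    ∀ s, |s| ≤ L → s ≠ thresh lam L b → qf lam b (thresh lam L b) < qf lam b s := by
  intro s hs hne
  have hL0 : 0 < L := lt_trans hlam hL
  rcases lt_or_gt_of_ne hb with h | h
  · -- |b| < lam, thresh = 0
    have ht : thresh lam L b = 0 := by simp [thresh, le_of_lt h]
    rw [ht] at hne ⊢
    have hb2 : b^2 < lam^2 := by
      have := mul_self_lt_mul_self (abs_nonneg b) h
      nlinarith [sq_abs b]
    simp only [qf, if_neg hne]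
    norm_num
    nlinarith [sq_nonneg (s - b)]
  · -- |b| > lam
    have ht : thresh lam L b = max (-L) (min L b) := by simp [thresh, not_le.mpr h]
    rw [ht] at hne ⊢
    set t := max (-L) (min L b) with htdef
    have htL : |t| ≤ L := by
      rw [abs_le]
      constructor
      · exact le_max_left _ _
      · exact max_le (le_of_lt (neg_lt_self hL0)) (min_le_left _ _)
    have ht0 : t ≠ 0 := by
      rcases le_or_gt 0 b with hb0 | hb0
      · have hbl : lam < b := by rwa [abs_of_nonneg hb0] at h
        have : lam ≤ t := le_max_of_le_right (le_min (le_of_lt hL) (le_of_lt hbl))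
        linarith
      · have hbl : b < -lam := by
          have := abs_of_neg hb0 ▸ h
          linarith [h, abs_of_neg hb0]
        have : t ≤ -lam := by
          have h1 : min L b ≤ -lam := le_trans (min_le_right _ _) (le_of_lt hbl)
          have h2 : -L ≤ -lam := by linarith
          exact max_le h2 h1
        intro hc; rw [hc] at this; linarith
    -- key quadratic fact: for any s' in [-L,L], (t-b)^2 ≤ (s'-b)^2, strict if s' ≠ t
    have hquad : ∀ s', |s'| ≤ L → s' ≠ t → (t-b)^2 < (s'-b)^2 := by
      intro s' hs' hne'
      have hs'1 := (abs_le.mp hs').1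
      have hs'2 := (abs_le.mp hs').2
      rcases le_or_gt b (-L) with hc | hc
      · have htv : t = -L := by
          have : min L b ≤ -L := le_trans (min_le_right _ _) hc
          rw [htdef]; exact le_antisymm (max_le (le_refl _) this) (le_max_left _ _)
        rw [htv]
        have : -L < s' := lt_of_le_of_ne hs'1 (by intro hx; exact hne' (by rw [htv, ← hx])) 
        nlinarith
      rcases le_or_gt L b with hc2 | hc2
      · have htv : t = L := by
          have : min L b = L := min_eq_left hc2
          rw [htdef, this]; exact max_eq_right (by linarith)
        rw [htv]
        have : s' < L := lt_of_le_of_ne hs'2 (by intro hx; exact hne' (by rw [htv, hx]))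
        nlinarith
      · have htv : t = b := by
          have h1 : min L b = b := min_eq_right (le_of_lt hc2)
          rw [htdef, h1]; exact max_eq_right (by linarith)
        rw [htv]
        have : s' - b ≠ 0 := by
          intro hx
          exact hne' (by rw [htv]; linarith)
        nlinarith [sq_pos_of_ne_zero this]
    -- value at t is negative: (t-b)^2 - b^2 + lam^2 < 0
    have hval : (t-b)^2 - b^2 + lam^2 < 0 := by
      rcases le_or_gt 0 b with hb0 | hb0
      · have hbl : lam < b := by rwa [abs_of_nonneg hb0] at h
        rcases le_or_gt b L with hbL | hbL
        · have htv : t = b := by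
            rw [htdef, min_eq_right hbL]; exact max_eq_right (by linarith)
          rw [htv]; nlinarith
        · have htv : t = L := by
            rw [htdef, min_eq_left (le_of_lt hbL)]; exact max_eq_right (by linarith)
          rw [htv]; nlinarith
      · have hbl : b < -lam := by
          have := abs_of_neg hb0; rw [this] at h; linarith
        rcases le_or_gt (-L) b with hbL | hbL
        · have htv : t = b := by
            rw [htdef, min_eq_right (by linarith : b ≤ L)]; exact max_eq_right hbL
          rw [htv]; nlinarith
        · have htv : t = -L := by
            have : min L b = b := min_eq_right (by linarith)
            rw [htdef, this]; exact max_eq_left (by linarith)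
          rw [htv]; nlinarith
    by_cases hs0 : s = 0
    · rw [hs0]
      simp only [qf, if_neg ht0]
      norm_num
      nlinarith
    · simp only [qf, if_neg ht0, if_neg hs0]
      have := hquad s hs hne
      nlinarith

lemma thresh_absle (lam L b : ℝ) (hlam : 0 < lam) (hL : lam < L) :
    |thresh lam L b| ≤ L := by
  have hL0 : 0 < L := lt_trans hlam hL
  rw [thresh]
  split
  · simp [le_of_lt hL0]
  · rw [abs_le]
    exact ⟨le_max_left _ _, max_le (by linarith) (min_le_left _ _)⟩

lemma min_eq_thresh (lam L b s : ℝ) (hlam : 0 < lam) (hL : lam < L) (hb : |b| ≠ lam)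
    (hs : |s| ≤ L) (hmin : ∀ s', |s'| ≤ L → qf lam b s ≤ qf lam b s') :
    s = thresh lam L b := by
  by_contra hne
  have h1 := thresh_strict lam L b hlam hL hb s hs hne
  have h2 := hmin _ (thresh_absle lam L b hlam hL)
  linarith

-- eventual support equality
lemma support_stab {N : ℕ} (lam : ℝ) (hlam : 0 < lam) (x : ℕ → Fin N → ℝ) (y : Fin N → ℝ)
    (hgap : ∀ k i, x k i = 0 ∨ lam ≤ |x k i|)
    (hx : ∀ i, Tendsto (fun k => x k i) atTop (nhds (y i))) :
    ∀ᶠ k in atTop, l0 (x k) = l0 y := by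
  have h : ∀ i : Fin N, ∀ᶠ k in atTop, (x k i = 0 ↔ y i = 0) := by
    intro i
    by_cases hy : y i = 0
    · have := (hx i).eventually (eventually_abs_sub_lt (y i) hlam)
      filter_upwards [this] with k hk
      rw [hy] at hk ⊢
      simp only [sub_zero] at hk
      have hx0 : x k i = 0 := by
        rcases hgap k i with h0 | h0
        · exact h0
        · linarith
      simp [hx0]
    · have hpos : 0 < |y i| := abs_pos.mpr hy
      have := (hx i).eventually (eventually_abs_sub_lt (y i) hpos)
      filter_upwards [this] with k hk
      constructor
      · intro h0; rw [h0, zero_sub, abs_neg] at hk; linarith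
      · intro h0; exact absurd h0 hy
  have hall := (Filter.eventually_all (ι := Fin N)).mpr h
  filter_upwards [hall] with k hk
  unfold l0
  congr 1
  apply Finset.filter_congr
  intro i _
  simp [hk i]

lemma frobSq_tendsto {m M : ℕ} (A : ℕ → Matrix (Fin m) (Fin M) ℝ) (B : Matrix (Fin m) (Fin M) ℝ)
    (h : ∀ p i, Tendsto (fun k => A k p i) atTop (nhds (B p i))) :
    Tendsto (fun k => frobSq (A k)) atTop (nhds (frobSq B)) := by
  unfold frobSq
  apply tendsto_finset_sum
  intro p _
  apply tendsto_finset_sum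
  intro i _
  exact (h p i).pow 2

lemma f_decomp {n N J : ℕ} (Y : Matrix (Fin n) (Fin N) ℝ) (lam : ℝ)
    (C : Fin J → Fin N → ℝ) (D : Fin J → Fin n → ℝ) (j : Fin J) :
    frobSq (Y - ∑ k, outer (D k) (C k)) + lam ^ 2 * ∑ k, (l0 (C k) : ℝ)
    = frobSq ((Y - ∑ k ∈ univ.filter (fun k => k < j), outer (D k) (C k)
        - ∑ k ∈ univ.filter (fun k => j < k), outer (D k) (C k)) - outer (D j) (C j))
      + lam ^ 2 * (l0 (C j) : ℝ)
      + lam ^ 2 * ((∑ k ∈ univ.filter (fun k => k < j), (l0 (C k) : ℝ))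
        + ∑ k ∈ univ.filter (fun k => j < k), (l0 (C k) : ℝ)) := by
  rw [sum_split (fun k => outer (D k) (C k)) j, sum_split (fun k => (l0 (C k) : ℝ)) j]
  have hm : Y - ((∑ k ∈ univ.filter (fun k => k < j), outer (D k) (C k)) + outer (D j) (C j)
      + ∑ k ∈ univ.filter (fun k => j < k), outer (D k) (C k))
      = (Y - ∑ k ∈ univ.filter (fun k => k < j), outer (D k) (C k)
        - ∑ k ∈ univ.filter (fun k => j < k), outer (D k) (C k)) - outer (D j) (C j) := by
    abel
  rw [hm]
  ring

lemma hybrid_decomp {n N J : ℕ} (Y : Matrix (Fin n) (Fin N) ℝ) (lam : ℝ)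
    (C : Fin J → Fin N → ℝ) (D : Fin J → Fin n → ℝ) (j : Fin J)
    (cc : Fin N → ℝ) (dd : Fin n → ℝ) :
    frobSq (Y - ∑ k, outer (Function.update D j dd k) (Function.update C j cc k))
      + lam ^ 2 * ∑ k, (l0 (Function.update C j cc k) : ℝ)
    = frobSq ((Y - ∑ k ∈ univ.filter (fun k => k < j), outer (D k) (C k)
        - ∑ k ∈ univ.filter (fun k => j < k), outer (D k) (C k)) - outer dd cc)
      + lam ^ 2 * (l0 cc : ℝ)
      + lam ^ 2 * ((∑ k ∈ univ.filter (fun k => k < j), (l0 (C k) : ℝ))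
        + ∑ k ∈ univ.filter (fun k => j < k), (l0 (C k) : ℝ)) := by
  rw [f_decomp Y lam _ _ j]
  rw [Function.update_self, Function.update_self]
  have e1 : ∑ k ∈ univ.filter (fun k => k < j), outer (Function.update D j dd k) (Function.update C j cc k)
      = ∑ k ∈ univ.filter (fun k => k < j), outer (D k) (C k) :=
    Finset.sum_congr rfl (fun k hk => by
      have h : k ≠ j := ne_of_lt (Finset.mem_filter.mp hk).2
      rw [Function.update_of_ne h, Function.update_of_ne h])
  have e2 : ∑ k ∈ univ.filter (fun k => j < k), outer (Function.update D j dd k) (Function.update C j cc k)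
      = ∑ k ∈ univ.filter (fun k => j < k), outer (D k) (C k) :=
    Finset.sum_congr rfl (fun k hk => by
      have h : k ≠ j := ne_of_gt (Finset.mem_filter.mp hk).2
      rw [Function.update_of_ne h, Function.update_of_ne h])
  have e3 : ∑ k ∈ univ.filter (fun k => k < j), (l0 (Function.update C j cc k) : ℝ)
      = ∑ k ∈ univ.filter (fun k => k < j), (l0 (C k) : ℝ) :=
    Finset.sum_congr rfl (fun k hk => by
      have h : k ≠ j := ne_of_lt (Finset.mem_filter.mp hk).2
      rw [Function.update_of_ne h])
  have e4 : ∑ k ∈ univ.filter (fun k => j < k), (l0 (Function.update C j cc k) : ℝ)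
      = ∑ k ∈ univ.filter (fun k => j < k), (l0 (C k) : ℝ) :=
    Finset.sum_congr rfl (fun k hk => by
      have h : k ≠ j := ne_of_gt (Finset.mem_filter.mp hk).2
      rw [Function.update_of_ne h])
  rw [e1, e2, e3, e4]

lemma frobSq_expand' {n N : ℕ} (E : Matrix (Fin n) (Fin N) ℝ) (dd : Fin n → ℝ)
    (cc : Fin N → ℝ) :
    frobSq (E - outer dd cc) =
      frobSq E - 2 * ∑ p, dd p * (E.mulVec cc p) + (∑ p, (dd p)^2) * (∑ i, (cc i)^2) := by
  simp only [frobSq, Matrix.sub_apply, outer, Matrix.of_apply, Matrix.mulVec,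
    dotProduct]
  have h1 : ∀ p : Fin n, ∀ i : Fin N,
      (E p i - dd p * cc i)^2 = E p i ^2 - 2 * (dd p * (E p i * cc i)) + dd p ^2 * cc i ^2 := by
    intro p i; ring
  rw [Finset.sum_congr rfl (fun p _ => Finset.sum_congr rfl (fun i _ => h1 p i))]
  simp only [Finset.sum_add_distrib, Finset.sum_sub_distrib]
  have hbb : ∑ p : Fin n, ∑ i : Fin N, 2 * (dd p * (E p i * cc i))
      = 2 * ∑ p : Fin n, dd p * ∑ i : Fin N, E p i * cc i := by
    rw [Finset.mul_sum]
    refine Finset.sum_congr rfl (fun p _ => ?_)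
    rw [Finset.mul_sum, Finset.mul_sum]
  have hcc : ∑ p : Fin n, ∑ i : Fin N, dd p^2 * cc i^2
      = (∑ p : Fin n, dd p ^2) * ∑ i : Fin N, cc i^2 := by
    rw [Finset.sum_mul]
    refine Finset.sum_congr rfl (fun p _ => ?_)
    exact (Finset.mul_sum _ _ _).symm
  rw [hbb, hcc]

lemma dot_swap {n N : ℕ} (E : Matrix (Fin n) (Fin N) ℝ) (dd : Fin n → ℝ) (cc : Fin N → ℝ) :
    ∑ i, cc i * (Eᵀ.mulVec dd) i = ∑ p, dd p * (E.mulVec cc) p := by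
  simp only [Matrix.mulVec, dotProduct, Matrix.transpose_apply]
  have lhs : ∀ i : Fin N, cc i * (∑ p, E p i * dd p) = ∑ p, cc i * (E p i * dd p) :=
    fun i => Finset.mul_sum _ _ _
  rw [Finset.sum_congr rfl (fun i _ => lhs i), Finset.sum_comm]
  refine Finset.sum_congr rfl (fun p _ => ?_)
  rw [Finset.mul_sum]
  exact Finset.sum_congr rfl (fun i _ => by ring)

lemma dmin_unique {n N : ℕ} (E : Matrix (Fin n) (Fin N) ℝ) (cj : Fin N → ℝ)
    (hv : E.mulVec cj ≠ 0) (d1 : Fin n → ℝ) (h1 : ∑ p, (d1 p)^2 = 1)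
    (hmin : ∀ dd : Fin n → ℝ, (∑ p, (dd p)^2) = 1 →
      frobSq (E - outer d1 cj) ≤ frobSq (E - outer dd cj)) :
    d1 = fun p => E.mulVec cj p / Real.sqrt (∑ p, (E.mulVec cj p)^2) := by
  set v := E.mulVec cj with hvdef
  set V := ∑ p, (v p)^2 with hVdef
  have hVpos : 0 < V := by
    rcases Function.ne_iff.mp hv with ⟨p, hp⟩
    exact Finset.sum_pos' (fun q _ => sq_nonneg _) ⟨p, Finset.mem_univ p, sq_pos_of_ne_zero hp⟩
  set nv := Real.sqrt V with hnvdef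
  have hnvpos : 0 < nv := Real.sqrt_pos.mpr hVpos
  have hnvsq : nv^2 = V := Real.sq_sqrt (le_of_lt hVpos)
  have hdd0 : ∑ p, (v p / nv)^2 = 1 := by
    have : ∀ p : Fin n, (v p / nv)^2 = (v p)^2 * (1/nv^2) := fun p => by ring
    rw [Finset.sum_congr rfl (fun p _ => this p), ← Finset.sum_mul, hnvsq]
    field_simp
    exact hVdef.symm
  have hkey := hmin (fun p => v p / nv) hdd0
  rw [frobSq_expand' E d1 cj, frobSq_expand' E _ cj, h1, hdd0] at hkey
  have hsum0 : ∑ p, (v p / nv) * v p = nv := by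
    have : ∀ p : Fin n, (v p / nv) * v p = (v p)^2 / nv := fun p => by ring
    rw [Finset.sum_congr rfl (fun p _ => this p), ← Finset.sum_div, ← hVdef, ← hnvsq]
    field_simp
  have hge : nv ≤ ∑ p, d1 p * v p := by
    rw [← hsum0]; linarith
  have hcs : (∑ p, d1 p * v p)^2 ≤ V := by
    have := Finset.sum_mul_sq_le_sq_mul_sq Finset.univ d1 v
    rw [h1, one_mul] at this
    exact this
  have hle : ∑ p, d1 p * v p ≤ nv := by
    nlinarith
  have heq : ∑ p, d1 p * v p = nv := le_antisymm hle hge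
  have hzero : ∑ p, (d1 p - v p / nv)^2 = 0 := by
    have expand : ∀ p : Fin n, (d1 p - v p / nv)^2
        = (d1 p)^2 - 2 * (d1 p * v p) / nv + (v p / nv)^2 := fun p => by
      field_simp; ring
    rw [Finset.sum_congr rfl (fun p _ => expand p)]
    rw [Finset.sum_add_distrib, Finset.sum_sub_distrib, h1, hdd0, ← Finset.sum_div,
      ← Finset.mul_sum, heq]
    field_simp
    norm_num
  funext p
  have : (d1 p - v p / nv)^2 = 0 := by
    have hnn : ∀ q ∈ Finset.univ, 0 ≤ (d1 q - v q / nv)^2 := fun q _ => sq_nonneg _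
    exact (Finset.sum_eq_zero_iff_of_nonneg hnn).mp hzero p (Finset.mem_univ p)
  have := pow_eq_zero_iff (n := 2) (by norm_num) |>.mp this
  linarith [this]

def mixSeq {J : ℕ} {α : Type*} (c : ℕ → Fin J → α) (t m : ℕ) : Fin J → α :=
  fun k => if (k : ℕ) < m then c (t+1) k else c t k

noncomputable def EjE {n N J : ℕ} (Y : Matrix (Fin n) (Fin N) ℝ)
    (c : ℕ → Fin J → Fin N → ℝ) (d : ℕ → Fin J → Fin n → ℝ) (t : ℕ) (j : Fin J) :
    Matrix (Fin n) (Fin N) ℝ :=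
  Y - ∑ k ∈ univ.filter (fun k => k < j), outer (d (t + 1) k) (c (t + 1) k)
    - ∑ k ∈ univ.filter (fun k => j < k), outer (d t k) (c t k)

noncomputable def RR {N J : ℕ} (c : ℕ → Fin J → Fin N → ℝ) (t : ℕ) (j : Fin J) : ℝ :=
  (∑ k ∈ univ.filter (fun k => k < j), (l0 (c (t+1) k) : ℝ))
    + ∑ k ∈ univ.filter (fun k => j < k), (l0 (c t k) : ℝ)

noncomputable def Gv {n N J : ℕ} (Y : Matrix (Fin n) (Fin N) ℝ) (lam : ℝ)
    (c : ℕ → Fin J → Fin N → ℝ) (d : ℕ → Fin J → Fin n → ℝ) (t m : ℕ) : ℝ :=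
  frobSq (Y - ∑ k, outer (mixSeq d t m k) (mixSeq c t m k))
    + lam ^ 2 * ∑ k, (l0 (mixSeq c t m k) : ℝ)

lemma mixSeq_lt {J : ℕ} {α : Type*} (c : ℕ → Fin J → α) (t m : ℕ) (k : Fin J)
    (h : (k : ℕ) < m) : mixSeq c t m k = c (t+1) k := by simp [mixSeq, h]

lemma mixSeq_ge {J : ℕ} {α : Type*} (c : ℕ → Fin J → α) (t m : ℕ) (k : Fin J)
    (h : ¬ (k : ℕ) < m) : mixSeq c t m k = c t k := by simp [mixSeq, h]

lemma mixSeq_zero {J : ℕ} {α : Type*} (c : ℕ → Fin J → α) (t : ℕ) :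
    mixSeq c t 0 = c t := by
  funext k; simp [mixSeq]

lemma mixSeq_top {J : ℕ} {α : Type*} (c : ℕ → Fin J → α) (t m : ℕ) (hm : J ≤ m) :
    mixSeq c t m = c (t+1) := by
  funext k; exact mixSeq_lt c t m k (lt_of_lt_of_le k.isLt hm)

lemma mixSeq_succ {J : ℕ} {α : Type*} (c : ℕ → Fin J → α) (t : ℕ) (j : Fin J) :
    mixSeq c t ((j:ℕ)+1) = Function.update (mixSeq c t (j:ℕ)) j (c (t+1) j) := by
  funext k
  by_cases hk : k = j
  · subst hk
    rw [Function.update_self, mixSeq_lt _ _ _ _ (Nat.lt_succ_self _)]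
  · rw [Function.update_of_ne hk]
    have hne : (k : ℕ) ≠ (j : ℕ) := fun h => hk (Fin.ext h)
    by_cases h : (k:ℕ) < (j:ℕ)
    · rw [mixSeq_lt _ _ _ _ h, mixSeq_lt _ _ _ _ (by omega)]
    · rw [mixSeq_ge _ _ _ _ h, mixSeq_ge _ _ _ _ (by omega)]

lemma mixSeq_self {J : ℕ} {α : Type*} (c : ℕ → Fin J → α) (t : ℕ) (j : Fin J) :
    mixSeq c t (j:ℕ) = Function.update (mixSeq c t (j:ℕ)) j (c t j) := by
  have : mixSeq c t (j:ℕ) j = c t j := mixSeq_ge _ _ _ _ (lt_irrefl _)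
  rw [← this, Function.update_eq_self]

lemma filter_sum_mix_lt {n N J : ℕ} (c : ℕ → Fin J → Fin N → ℝ) (d : ℕ → Fin J → Fin n → ℝ)
    (t : ℕ) (j : Fin J) :
    ∑ k ∈ univ.filter (fun k => k < j), outer (mixSeq d t (j:ℕ) k) (mixSeq c t (j:ℕ) k)
      = ∑ k ∈ univ.filter (fun k => k < j), outer (d (t+1) k) (c (t+1) k) :=
  Finset.sum_congr rfl (fun k hk => by
    have h : (k:ℕ) < (j:ℕ) := (Finset.mem_filter.mp hk).2
    rw [mixSeq_lt _ _ _ _ h, mixSeq_lt _ _ _ _ h])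

lemma filter_sum_mix_gt {n N J : ℕ} (c : ℕ → Fin J → Fin N → ℝ) (d : ℕ → Fin J → Fin n → ℝ)
    (t : ℕ) (j : Fin J) :
    ∑ k ∈ univ.filter (fun k => j < k), outer (mixSeq d t (j:ℕ) k) (mixSeq c t (j:ℕ) k)
      = ∑ k ∈ univ.filter (fun k => j < k), outer (d t k) (c t k) :=
  Finset.sum_congr rfl (fun k hk => by
    have h : ¬ (k:ℕ) < (j:ℕ) := by
      have := (Finset.mem_filter.mp hk).2; omega
    rw [mixSeq_ge _ _ _ _ h, mixSeq_ge _ _ _ _ h])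

lemma filter_suml_mix_lt {N J : ℕ} (c : ℕ → Fin J → Fin N → ℝ) (t : ℕ) (j : Fin J) :
    ∑ k ∈ univ.filter (fun k => k < j), (l0 (mixSeq c t (j:ℕ) k) : ℝ)
      = ∑ k ∈ univ.filter (fun k => k < j), (l0 (c (t+1) k) : ℝ) :=
  Finset.sum_congr rfl (fun k hk => by
    rw [mixSeq_lt _ _ _ _ (Finset.mem_filter.mp hk).2])

lemma filter_suml_mix_gt {N J : ℕ} (c : ℕ → Fin J → Fin N → ℝ) (t : ℕ) (j : Fin J) :
    ∑ k ∈ univ.filter (fun k => j < k), (l0 (mixSeq c t (j:ℕ) k) : ℝ)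
      = ∑ k ∈ univ.filter (fun k => j < k), (l0 (c t k) : ℝ) :=
  Finset.sum_congr rfl (fun k hk => by
    have h : ¬ (k:ℕ) < (j:ℕ) := by
      have := (Finset.mem_filter.mp hk).2; omega
    rw [mixSeq_ge _ _ _ _ h])

lemma Gv_decomp1 {n N J : ℕ} (Y : Matrix (Fin n) (Fin N) ℝ) (lam : ℝ)
    (c : ℕ → Fin J → Fin N → ℝ) (d : ℕ → Fin J → Fin n → ℝ) (t : ℕ) (j : Fin J) :
    Gv Y lam c d t (j:ℕ)
      = frobSq (EjE Y c d t j - outer (d t j) (c t j)) + lam^2 * (l0 (c t j) : ℝ)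
        + lam^2 * RR c t j := by
  unfold Gv EjE RR
  conv_lhs => rw [mixSeq_self c t j, mixSeq_self d t j]
  rw [hybrid_decomp Y lam (mixSeq c t (j:ℕ)) (mixSeq d t (j:ℕ)) j (c t j) (d t j)]
  rw [filter_sum_mix_lt, filter_sum_mix_gt, filter_suml_mix_lt, filter_suml_mix_gt]

lemma Gv_decomp2 {n N J : ℕ} (Y : Matrix (Fin n) (Fin N) ℝ) (lam : ℝ)
    (c : ℕ → Fin J → Fin N → ℝ) (d : ℕ → Fin J → Fin n → ℝ) (t : ℕ) (j : Fin J) :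
    Gv Y lam c d t ((j:ℕ)+1)
      = frobSq (EjE Y c d t j - outer (d (t+1) j) (c (t+1) j)) + lam^2 * (l0 (c (t+1) j) : ℝ)
        + lam^2 * RR c t j := by
  unfold Gv EjE RR
  conv_lhs => rw [mixSeq_succ c t j, mixSeq_succ d t j]
  rw [hybrid_decomp Y lam (mixSeq c t (j:ℕ)) (mixSeq d t (j:ℕ)) j (c (t+1) j) (d (t+1) j)]
  rw [filter_sum_mix_lt, filter_sum_mix_gt, filter_suml_mix_lt, filter_suml_mix_gt]

lemma val_eq {n N : ℕ} (lam : ℝ) (E : Matrix (Fin n) (Fin N) ℝ) (dd : Fin n → ℝ)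
    (cc : Fin N → ℝ) (hd : ∑ p, (dd p)^2 = 1) :
    frobSq (E - outer dd cc) + lam^2 * (l0 cc : ℝ)
      = frobSq E + ∑ i, qf lam (Eᵀ.mulVec dd i) (cc i) := by
  rw [frobSq_expand E dd cc hd, l0_eq_sum, Finset.mul_sum, add_assoc, ← Finset.sum_add_distrib]
  congr 1

lemma coord_min_of_min {N : ℕ} (lam L : ℝ) (b : Fin N → ℝ) (x : Fin N → ℝ)
    (hx : ∀ i, |x i| ≤ L)
    (hmin : ∀ cc : Fin N → ℝ, (∀ i, |cc i| ≤ L) →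
      ∑ i, qf lam (b i) (x i) ≤ ∑ i, qf lam (b i) (cc i)) :
    ∀ i s, |s| ≤ L → qf lam (b i) (x i) ≤ qf lam (b i) s := by
  intro i s hs
  have hbox : ∀ i', |Function.update x i s i'| ≤ L := by
    intro i'
    by_cases h : i' = i
    · subst h; rw [Function.update_self]; exact hs
    · rw [Function.update_of_ne h]; exact hx i'
  have h := hmin (Function.update x i s) hbox
  rw [← Finset.add_sum_erase _ _ (Finset.mem_univ i),
    ← Finset.add_sum_erase _ (fun i' => qf lam (b i') (Function.update x i s i'))
      (Finset.mem_univ i)] at h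
  rw [Function.update_self] at h
  have herased : ∑ i' ∈ Finset.univ.erase i, qf lam (b i') (Function.update x i s i')
      = ∑ i' ∈ Finset.univ.erase i, qf lam (b i') (x i') :=
    Finset.sum_congr rfl (fun i' hi' => by
      rw [Function.update_of_ne (Finset.ne_of_mem_erase hi')])
  rw [herased] at h
  linarith

lemma thresh_mul_nonneg (lam L b : ℝ) (hlam : 0 < lam) (hL : lam < L) :
    0 ≤ thresh lam L b * b := by
  have hL0 : 0 < L := lt_trans hlam hL
  rw [thresh]
  split
  · simp
  · rename_i h
    push_neg at h
    rcases le_or_gt 0 b with hb | hb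
    · have hbl : lam < b := by rwa [abs_of_nonneg hb] at h
      have ht : 0 < max (-L) (min L b) :=
        lt_max_of_lt_right (lt_min hL0 (by linarith))
      positivity
    · have hbl : b < -lam := by
        rw [abs_of_neg hb] at h; linarith
      have ht : max (-L) (min L b) < 0 := by
        apply max_lt (by linarith)
        exact lt_of_le_of_lt (min_le_right _ _) (by linarith)
      nlinarith

lemma thresh_mul_pos (lam L b : ℝ) (hlam : 0 < lam) (hL : lam < L)
    (h0 : thresh lam L b ≠ 0) : 0 < thresh lam L b * b := by
  have hL0 : 0 < L := lt_trans hlam hL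
  rw [thresh] at h0 ⊢
  split
  · rename_i h; rw [if_pos h] at h0; exact absurd rfl h0
  · rename_i h
    push_neg at h
    rcases le_or_gt 0 b with hb | hb
    · have hbl : lam < b := by rwa [abs_of_nonneg hb] at h
      have ht : 0 < max (-L) (min L b) :=
        lt_max_of_lt_right (lt_min hL0 (by linarith))
      exact mul_pos ht (by linarith)
    · have hbl : b < -lam := by
        rw [abs_of_neg hb] at h; linarith
      have ht : max (-L) (min L b) < 0 := by
        apply max_lt (by linarith)
        exact lt_of_le_of_lt (min_le_right _ _) (by linarith)
      nlinarith

theorem stmt16 {n N J : ℕ} (hn : 0 < n) (hN : 0 < N) (hJ : 0 < J)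
    (Y : Matrix (Fin n) (Fin N) ℝ) (lam L : ℝ) (hlam : 0 < lam) (hL : lam < L)
    (f : (Fin J → Fin N → ℝ) → (Fin J → Fin n → ℝ) → ℝ)
    (hf : f = fun C D =>
      frobSq (Y - ∑ j, outer (D j) (C j)) + lam ^ 2 * ∑ j, (l0 (C j) : ℝ))
    (c : ℕ → Fin J → Fin N → ℝ) (d : ℕ → Fin J → Fin n → ℝ)
    (hdunit : ∀ t j, Real.sqrt (∑ i, (d t j i) ^ 2) = 1)
    (hcL : ∀ t j i, |c t j i| ≤ L)
    (hgap : ∀ t j i, c t j i = 0 ∨ lam ≤ |c t j i|)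
    (Ej : ℕ → Fin J → Matrix (Fin n) (Fin N) ℝ)
    (hEj : Ej = fun t j => Y
      - ∑ k ∈ Finset.univ.filter (fun k => k < j), outer (d (t + 1) k) (c (t + 1) k)
      - ∑ k ∈ Finset.univ.filter (fun k => j < k), outer (d t k) (c t k))
    (ha : ∀ t j, ∀ cc : Fin N → ℝ, (∀ i, |cc i| ≤ L) →
      frobSq (Ej t j - outer (d t j) (c (t + 1) j)) + lam ^ 2 * (l0 (c (t + 1) j) : ℝ) ≤
      frobSq (Ej t j - outer (d t j) cc) + lam ^ 2 * (l0 cc : ℝ))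
    (hb : ∀ t j, ∀ dd : Fin n → ℝ, Real.sqrt (∑ i, (dd i) ^ 2) = 1 →
      frobSq (Ej t j - outer (d (t + 1) j) (c (t + 1) j)) ≤
      frobSq (Ej t j - outer dd (c (t + 1) j)))
    (hnotie : ∀ (C : Fin J → Fin N → ℝ) (D : Fin J → Fin n → ℝ),
      (∃ φ : ℕ → ℕ, StrictMono φ ∧
        Tendsto (fun k => (c (φ k), d (φ k))) atTop (nhds (C, D))) →
      ∀ j i, |(Y - ∑ k, outer (D k) (C k) + outer (D j) (C j))ᵀ.mulVec (D j) i| ≠ lam) :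
    ∀ (Cstar : Fin J → Fin N → ℝ) (Dstar : Fin J → Fin n → ℝ),
      (∃ φ : ℕ → ℕ, StrictMono φ ∧
        Tendsto (fun k => (c (φ k), d (φ k))) atTop (nhds (Cstar, Dstar))) →
      ∀ j : Fin J,
        ((∀ i, |Cstar j i| ≤ L) ∧
          ∀ cc : Fin N → ℝ, (∀ i, |cc i| ≤ L) →
            f Cstar Dstar ≤ f (Function.update Cstar j cc) Dstar) ∧
        (Real.sqrt (∑ i, (Dstar j i) ^ 2) = 1 ∧
          ∀ dd : Fin n → ℝ, Real.sqrt (∑ i, (dd i) ^ 2) = 1 →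
            f Cstar Dstar ≤ f Cstar (Function.update Dstar j dd)) := by
  intro Cstar Dstar hacc
  obtain ⟨φ, hφm, hφt⟩ := hacc
  have hL0 : 0 < L := lt_trans hlam hL
  have hdsum : ∀ t j, ∑ i, (d t j i)^2 = 1 := fun t j => Real.sqrt_eq_one.mp (hdunit t j)
  -- beta-reduced update hypotheses
  have haB : ∀ t (j : Fin J), ∀ cc : Fin N → ℝ, (∀ i, |cc i| ≤ L) →
      frobSq (EjE Y c d t j - outer (d t j) (c (t + 1) j)) + lam ^ 2 * (l0 (c (t + 1) j) : ℝ) ≤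
      frobSq (EjE Y c d t j - outer (d t j) cc) + lam ^ 2 * (l0 cc : ℝ) := by
    intro t j cc hcc
    have h := ha t j cc hcc
    simp only [hEj] at h
    exact h
  have hbB : ∀ t (j : Fin J), ∀ dd : Fin n → ℝ, (∑ i, (dd i)^2) = 1 →
      frobSq (EjE Y c d t j - outer (d (t + 1) j) (c (t + 1) j)) ≤
      frobSq (EjE Y c d t j - outer dd (c (t + 1) j)) := by
    intro t j dd hdd
    have h := hb t j dd (Real.sqrt_eq_one.mpr hdd)
    simp only [hEj] at h
    exact h
  -- the objective along iterates
  have hGv0 : ∀ t, Gv Y lam c d t 0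
      = frobSq (Y - ∑ k, outer (d t k) (c t k)) + lam^2 * ∑ k, (l0 (c t k):ℝ) := by
    intro t; unfold Gv; rw [mixSeq_zero, mixSeq_zero]
  have hGvtop : ∀ t m, J ≤ m → Gv Y lam c d t m
      = frobSq (Y - ∑ k, outer (d (t+1) k) (c (t+1) k)) + lam^2 * ∑ k, (l0 (c (t+1) k):ℝ) := by
    intro t m hm; unfold Gv; rw [mixSeq_top _ _ _ hm, mixSeq_top _ _ _ hm]
  have hstep : ∀ t m, Gv Y lam c d t (m+1) ≤ Gv Y lam c d t m := by
    intro t m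
    by_cases hm : m < J
    · set j : Fin J := ⟨m, hm⟩ with hj
      have hm1 : m = (j : ℕ) := rfl
      rw [hm1, Gv_decomp1 Y lam c d t j, Gv_decomp2 Y lam c d t j]
      have h1 := hbB t j (d t j) (hdsum t j)
      have h2 := haB t j (c t j) (fun i => hcL t j i)
      linarith
    · have hJm : J ≤ m := le_of_not_gt hm
      rw [hGvtop t m hJm, hGvtop t (m+1) (le_trans hJm (Nat.le_succ m))]
  have hanti : ∀ t, Antitone (Gv Y lam c d t) := fun t => antitone_nat_of_succ_le (hstep t)
  set fs : ℕ → ℝ := fun t => Gv Y lam c d t 0 with hfs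
  have hfs_succ : ∀ t, fs (t+1) ≤ fs t := by
    intro t
    have h1 : fs (t+1) = Gv Y lam c d t J := by
      have e1 : fs (t+1) = frobSq (Y - ∑ k, outer (d (t+1) k) (c (t+1) k)) + lam^2 * ∑ k, (l0 (c (t+1) k):ℝ) := hGv0 (t+1)
      rw [e1, hGvtop t J le_rfl]
    rw [h1]
    exact hanti t (Nat.zero_le J)
  have hfs_anti : Antitone fs := antitone_nat_of_succ_le hfs_succ
  have hfseq : ∀ t, fs (t+1) = Gv Y lam c d t J := by
    intro t
    have e1 : fs (t+1) = frobSq (Y - ∑ k, outer (d (t+1) k) (c (t+1) k))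
        + lam^2 * ∑ k, (l0 (c (t+1) k):ℝ) := hGv0 (t+1)
    rw [e1, hGvtop t J le_rfl]
  have hfs_nonneg : ∀ t, 0 ≤ fs t := by
    intro t
    have h0 : fs t = frobSq (Y - ∑ k, outer (d t k) (c t k)) + lam^2 * ∑ k, (l0 (c t k):ℝ) := hGv0 t
    rw [h0]
    have h1 := frobSq_nonneg (Y - ∑ k, outer (d t k) (c t k))
    have h2 : (0:ℝ) ≤ ∑ k, (l0 (c t k):ℝ) :=
      Finset.sum_nonneg (fun k _ => Nat.cast_nonneg _)
    positivity
  have hbdd : BddBelow (Set.range fs) := by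
    refine ⟨0, ?_⟩
    rintro x ⟨t, rfl⟩
    exact hfs_nonneg t
  set finf : ℝ := ⨅ t, fs t with hfinf
  have hfslim : Tendsto fs atTop (nhds finf) := tendsto_atTop_ciInf hfs_anti hbdd
  -- compactness extraction for the shifted sequence
  have hdabs : ∀ t j i, |d t j i| ≤ 1 := by
    intro t j i
    have h1 : (d t j i)^2 ≤ 1 := by
      rw [← hdsum t j]
      exact Finset.single_le_sum (f := fun q => (d t j q)^2) (fun q _ => sq_nonneg _) (Finset.mem_univ i)
    nlinarith [abs_nonneg (d t j i), sq_abs (d t j i)]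
  have hKcomp : IsCompact ((Set.univ.pi fun _ : Fin J => Set.univ.pi fun _ : Fin N => Set.Icc (-L) L) ×ˢ
      (Set.univ.pi fun _ : Fin J => Set.univ.pi fun _ : Fin n => Set.Icc (-(1:ℝ)) 1)) :=
    (isCompact_univ_pi fun _ => isCompact_univ_pi fun _ => isCompact_Icc).prod
      (isCompact_univ_pi fun _ => isCompact_univ_pi fun _ => isCompact_Icc)
  have hmem : ∀ k, (c (φ k + 1), d (φ k + 1)) ∈
      ((Set.univ.pi fun _ : Fin J => Set.univ.pi fun _ : Fin N => Set.Icc (-L) L) ×ˢ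
      (Set.univ.pi fun _ : Fin J => Set.univ.pi fun _ : Fin n => Set.Icc (-(1:ℝ)) 1)) := by
    intro k
    constructor
    · intro j _
      intro i _
      exact Set.mem_Icc.mpr (abs_le.mp (hcL _ j i))
    · intro j _
      intro i _
      exact Set.mem_Icc.mpr (abs_le.mp (hdabs _ j i))
  obtain ⟨⟨C', D'⟩, -, θ, hθm, hθt⟩ :=
    hKcomp.tendsto_subseq (x := fun k => (c (φ k + 1), d (φ k + 1))) hmem
  set ψ : ℕ → ℕ := fun k => φ (θ k) with hψ
  have hψm : StrictMono ψ := hφm.comp hθm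
  have hψtop : Tendsto ψ atTop atTop := hψm.tendsto_atTop
  have hpair : Tendsto (fun k => (c (ψ k), d (ψ k))) atTop (nhds (Cstar, Dstar)) :=
    hφt.comp hθm.tendsto_atTop
  have hpair' : Tendsto (fun k => (c (ψ k + 1), d (ψ k + 1))) atTop (nhds (C', D')) := hθt
  -- coordinatewise limits
  have hcs : ∀ (j : Fin J) i, Tendsto (fun k => c (ψ k) j i) atTop (nhds (Cstar j i)) := by
    intro j i
    have h1 : Tendsto (fun k => c (ψ k)) atTop (nhds Cstar) :=
      (continuous_fst.tendsto _).comp hpair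
    exact (tendsto_pi_nhds.mp ((tendsto_pi_nhds.mp h1) j)) i
  have hds : ∀ (j : Fin J) i, Tendsto (fun k => d (ψ k) j i) atTop (nhds (Dstar j i)) := by
    intro j i
    have h1 : Tendsto (fun k => d (ψ k)) atTop (nhds Dstar) :=
      (continuous_snd.tendsto _).comp hpair
    exact (tendsto_pi_nhds.mp ((tendsto_pi_nhds.mp h1) j)) i
  have hcs' : ∀ (j : Fin J) i, Tendsto (fun k => c (ψ k + 1) j i) atTop (nhds (C' j i)) := by
    intro j i
    have h1 : Tendsto (fun k => c (ψ k + 1)) atTop (nhds C') :=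
      (continuous_fst.tendsto _).comp hpair'
    exact (tendsto_pi_nhds.mp ((tendsto_pi_nhds.mp h1) j)) i
  have hds' : ∀ (j : Fin J) i, Tendsto (fun k => d (ψ k + 1) j i) atTop (nhds (D' j i)) := by
    intro j i
    have h1 : Tendsto (fun k => d (ψ k + 1)) atTop (nhds D') :=
      (continuous_snd.tendsto _).comp hpair'
    exact (tendsto_pi_nhds.mp ((tendsto_pi_nhds.mp h1) j)) i
  -- limit point properties
  have hCstarL : ∀ (j : Fin J) i, |Cstar j i| ≤ L := fun j i =>
    le_of_tendsto (hcs j i).abs (Filter.Eventually.of_forall fun k => hcL _ j i)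
  have hC'L : ∀ (j : Fin J) i, |C' j i| ≤ L := fun j i =>
    le_of_tendsto (hcs' j i).abs (Filter.Eventually.of_forall fun k => hcL _ j i)
  have hDsum : ∀ j : Fin J, ∑ i, (Dstar j i)^2 = 1 := by
    intro j
    have h1 : Tendsto (fun k => ∑ i, (d (ψ k) j i)^2) atTop (nhds (∑ i, (Dstar j i)^2)) :=
      tendsto_finset_sum _ (fun i _ => (hds j i).pow 2)
    have h2 : Tendsto (fun k => ∑ i, (d (ψ k) j i)^2) atTop (nhds 1) := by
      simp only [hdsum]; exact tendsto_const_nhds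
    exact tendsto_nhds_unique h1 h2
  have hD'sum : ∀ j : Fin J, ∑ i, (D' j i)^2 = 1 := by
    intro j
    have h1 : Tendsto (fun k => ∑ i, (d (ψ k + 1) j i)^2) atTop (nhds (∑ i, (D' j i)^2)) :=
      tendsto_finset_sum _ (fun i _ => (hds' j i).pow 2)
    have h2 : Tendsto (fun k => ∑ i, (d (ψ k + 1) j i)^2) atTop (nhds 1) := by
      simp only [hdsum]; exact tendsto_const_nhds
    exact tendsto_nhds_unique h1 h2
  have hfsψ : Tendsto (fun k => fs (ψ k)) atTop (nhds finf) := hfslim.comp hψtop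
  have hψtop1 : Tendsto (fun k => ψ k + 1) atTop atTop :=
    Filter.tendsto_atTop_mono (fun k => Nat.le_succ (ψ k)) hψtop
  have hfsψ1 : Tendsto (fun k => fs (ψ k + 1)) atTop (nhds finf) := hfslim.comp hψtop1
  -- main induction over columns
  have main : ∀ m : ℕ, ∀ j : Fin J, (j:ℕ) < m →
      ((C' j = Cstar j ∧ outer (D' j) (C' j) = outer (Dstar j) (Cstar j)) ∧
       ((∀ cc : Fin N → ℝ, (∀ i, |cc i| ≤ L) →
           f Cstar Dstar ≤ f (Function.update Cstar j cc) Dstar) ∧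
        (∀ dd : Fin n → ℝ, (∑ i, (dd i)^2) = 1 →
           f Cstar Dstar ≤ f Cstar (Function.update Dstar j dd)))) := by
    intro m
    induction m with
    | zero => intro j hj; omega
    | succ m ih =>
      intro j hj
      rcases Nat.lt_succ_iff_lt_or_eq.mp hj with hjm | hjm
      · exact ih j hjm
      · -- CORE: j has index m, invariant holds for all k < j
        have ihinv : ∀ k : Fin J, k < j →
            C' k = Cstar k ∧ outer (D' k) (C' k) = outer (Dstar k) (Cstar k) := by
          intro k hk
          have hk' : (k:ℕ) < (j:ℕ) := hk
          exact (ih k (by omega)).1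
        set Es : Matrix (Fin n) (Fin N) ℝ :=
          Y - (∑ k ∈ univ.filter (fun k => k < j), outer (Dstar k) (Cstar k))
            - ∑ k ∈ univ.filter (fun k => j < k), outer (Dstar k) (Cstar k) with hEs
        set Rst : ℝ := (∑ k ∈ univ.filter (fun k => k < j), (l0 (Cstar k):ℝ))
            + ∑ k ∈ univ.filter (fun k => j < k), (l0 (Cstar k):ℝ) with hRst
        set bv : Fin N → ℝ := Esᵀ.mulVec (Dstar j) with hbv
        have hbne : ∀ i, |bv i| ≠ lam := by
          intro i
          have h := hnotie Cstar Dstar ⟨φ, hφm, hφt⟩ j i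
          have he : Y - ∑ k, outer (Dstar k) (Cstar k) + outer (Dstar j) (Cstar j) = Es := by
            rw [sum_split (fun k => outer (Dstar k) (Cstar k)) j, hEs]
            abel
          rwa [he] at h
        -- entrywise limits of the error matrices
        have hEntry : ∀ p i, Tendsto (fun k => EjE Y c d (ψ k) j p i) atTop (nhds (Es p i)) := by
          intro p i
          have hval : ∀ t, EjE Y c d t j p i
              = Y p i - (∑ k' ∈ univ.filter (fun k' => k' < j), d (t+1) k' p * c (t+1) k' i)
                - ∑ k' ∈ univ.filter (fun k' => j < k'), d t k' p * c t k' i := by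
            intro t
            simp [EjE, Matrix.sub_apply, Matrix.sum_apply, outer]
          have hEsval : Es p i
              = Y p i - (∑ k' ∈ univ.filter (fun k' => k' < j), Dstar k' p * Cstar k' i)
                - ∑ k' ∈ univ.filter (fun k' => j < k'), Dstar k' p * Cstar k' i := by
            rw [hEs]
            simp [Matrix.sub_apply, Matrix.sum_apply, outer]
          have hlim1 : Tendsto
              (fun k => ∑ k' ∈ univ.filter (fun k' => k' < j), d (ψ k + 1) k' p * c (ψ k + 1) k' i)
              atTop (nhds (∑ k' ∈ univ.filter (fun k' => k' < j), Dstar k' p * Cstar k' i)) := by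
            apply tendsto_finset_sum
            intro k' hk'
            have hk'j : k' < j := (Finset.mem_filter.mp hk').2
            have h1 := (hds' k' p).mul (hcs' k' i)
            have heq : D' k' p * C' k' i = Dstar k' p * Cstar k' i := by
              have h2 := (ihinv k' hk'j).2
              have h3 := congrFun (congrFun h2 p) i
              simpa [outer] using h3
            rwa [heq] at h1
          have hlim2 : Tendsto
              (fun k => ∑ k' ∈ univ.filter (fun k' => j < k'), d (ψ k) k' p * c (ψ k) k' i)
              atTop (nhds (∑ k' ∈ univ.filter (fun k' => j < k'), Dstar k' p * Cstar k' i)) :=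
            tendsto_finset_sum _ (fun k' _ => (hds k' p).mul (hcs k' i))
          have hconstY : Tendsto (fun _ : ℕ => Y p i) atTop (nhds (Y p i)) := tendsto_const_nhds
          have h4 := (hconstY.sub hlim1).sub hlim2
          rw [← hEsval] at h4
          exact Tendsto.congr (fun k => (hval (ψ k)).symm) h4
        have hfrob : ∀ (xseq : ℕ → Fin n → ℝ) (yseq : ℕ → Fin N → ℝ)
            (x : Fin n → ℝ) (y : Fin N → ℝ),
            (∀ p, Tendsto (fun k => xseq k p) atTop (nhds (x p))) →
            (∀ i, Tendsto (fun k => yseq k i) atTop (nhds (y i))) →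
            Tendsto (fun k => frobSq (EjE Y c d (ψ k) j - outer (xseq k) (yseq k))) atTop
              (nhds (frobSq (Es - outer x y))) := by
          intro xseq yseq x y hx hy
          apply frobSq_tendsto
          intro p i
          exact (hEntry p i).sub ((hx p).mul (hy i))
        -- eventual stabilization of the sparsity terms
        have hl0c : ∀ᶠ k in atTop, l0 (c (ψ k) j) = l0 (Cstar j) :=
          support_stab lam hlam (fun k => c (ψ k) j) (Cstar j)
            (fun k i => hgap _ j i) (fun i => hcs j i)
        have hl0c' : ∀ᶠ k in atTop, l0 (c (ψ k + 1) j) = l0 (C' j) :=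
          support_stab lam hlam (fun k => c (ψ k + 1) j) (C' j)
            (fun k i => hgap _ j i) (fun i => hcs' j i)
        have hRReq : ∀ᶠ k in atTop, RR c (ψ k) j = Rst := by
          have h1 : ∀ k' ∈ univ.filter (fun k' => k' < j),
              ∀ᶠ k in atTop, l0 (c (ψ k + 1) k') = l0 (C' k') := fun k' _ =>
            support_stab lam hlam (fun k => c (ψ k + 1) k') (C' k')
              (fun k i => hgap _ k' i) (fun i => hcs' k' i)
          have h2 : ∀ k' ∈ univ.filter (fun k' => j < k'),
              ∀ᶠ k in atTop, l0 (c (ψ k) k') = l0 (Cstar k') := fun k' _ =>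
            support_stab lam hlam (fun k => c (ψ k) k') (Cstar k')
              (fun k i => hgap _ k' i) (fun i => hcs k' i)
          have h3 := (Filter.eventually_all_finset _).mpr h1
          have h4 := (Filter.eventually_all_finset _).mpr h2
          filter_upwards [h3, h4] with k hk3 hk4
          rw [RR, hRst]
          congr 1
          · refine Finset.sum_congr rfl (fun k' hk' => ?_)
            rw [hk3 k' hk', (ihinv k' (Finset.mem_filter.mp hk').2).1]
          · refine Finset.sum_congr rfl (fun k' hk' => ?_)
            rw [hk4 k' hk']
        -- limits of the three sandwiched value sequences
        have hlam2l0 : ∀ (g : ℕ → Fin N → ℝ) (y : Fin N → ℝ),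
            (∀ᶠ k in atTop, l0 (g k) = l0 y) →
            Tendsto (fun k => lam^2 * (l0 (g k):ℝ)) atTop (nhds (lam^2 * (l0 y:ℝ))) := by
          intro g y hev
          have hconst : Tendsto (fun _ : ℕ => lam^2 * (l0 y:ℝ)) atTop (nhds (lam^2 * (l0 y:ℝ))) :=
            tendsto_const_nhds
          refine Tendsto.congr' ?_ hconst
          filter_upwards [hev] with k hk
          rw [hk]
        have hRRlim : Tendsto (fun k => lam^2 * RR c (ψ k) j) atTop (nhds (lam^2 * Rst)) := by
          have hconst : Tendsto (fun _ : ℕ => lam^2 * Rst) atTop (nhds (lam^2 * Rst)) :=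
            tendsto_const_nhds
          refine Tendsto.congr' ?_ hconst
          filter_upwards [hRReq] with k hk
          rw [hk]
        have hT1 : Tendsto (fun k => Gv Y lam c d (ψ k) (j:ℕ)) atTop
            (nhds (frobSq (Es - outer (Dstar j) (Cstar j)) + lam^2 * (l0 (Cstar j):ℝ)
              + lam^2 * Rst)) := by
          have hfr := hfrob (fun k => d (ψ k) j) (fun k => c (ψ k) j) (Dstar j) (Cstar j)
            (hds j) (hcs j)
          have h := (hfr.add (hlam2l0 _ _ hl0c)).add hRRlim
          exact Tendsto.congr (fun k => (Gv_decomp1 Y lam c d (ψ k) j).symm) h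
        have hT3 : Tendsto (fun k => Gv Y lam c d (ψ k) ((j:ℕ)+1)) atTop
            (nhds (frobSq (Es - outer (D' j) (C' j)) + lam^2 * (l0 (C' j):ℝ)
              + lam^2 * Rst)) := by
          have hfr := hfrob (fun k => d (ψ k + 1) j) (fun k => c (ψ k + 1) j) (D' j) (C' j)
            (hds' j) (hcs' j)
          have h := (hfr.add (hlam2l0 _ _ hl0c')).add hRRlim
          exact Tendsto.congr (fun k => (Gv_decomp2 Y lam c d (ψ k) j).symm) h
        have hT1f : frobSq (Es - outer (Dstar j) (Cstar j)) + lam^2 * (l0 (Cstar j):ℝ)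
            + lam^2 * Rst = finf := by
          refine tendsto_nhds_unique hT1
            (tendsto_of_tendsto_of_tendsto_of_le_of_le hfsψ1 hfsψ ?_ ?_)
          · intro k
            show fs (ψ k + 1) ≤ Gv Y lam c d (ψ k) (j:ℕ)
            rw [hfseq (ψ k)]
            exact hanti (ψ k) (le_of_lt j.isLt)
          · intro k
            show Gv Y lam c d (ψ k) (j:ℕ) ≤ fs (ψ k)
            exact hanti (ψ k) (Nat.zero_le (j:ℕ))
        have hT3f : frobSq (Es - outer (D' j) (C' j)) + lam^2 * (l0 (C' j):ℝ)
            + lam^2 * Rst = finf := by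
          refine tendsto_nhds_unique hT3
            (tendsto_of_tendsto_of_tendsto_of_le_of_le hfsψ1 hfsψ ?_ ?_)
          · intro k
            show fs (ψ k + 1) ≤ Gv Y lam c d (ψ k) ((j:ℕ)+1)
            rw [hfseq (ψ k)]
            exact hanti (ψ k) (Nat.succ_le_of_lt j.isLt)
          · intro k
            show Gv Y lam c d (ψ k) ((j:ℕ)+1) ≤ fs (ψ k)
            exact hanti (ψ k) (Nat.zero_le _)
        have hM_ge : ∀ k, Gv Y lam c d (ψ k) ((j:ℕ)+1) ≤
            frobSq (EjE Y c d (ψ k) j - outer (d (ψ k) j) (c (ψ k + 1) j))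
              + lam^2 * (l0 (c (ψ k + 1) j):ℝ) + lam^2 * RR c (ψ k) j := by
          intro k
          rw [Gv_decomp2 Y lam c d (ψ k) j]
          have h := hbB (ψ k) j (d (ψ k) j) (hdsum (ψ k) j)
          linarith
        have hM_le : ∀ k, frobSq (EjE Y c d (ψ k) j - outer (d (ψ k) j) (c (ψ k + 1) j))
              + lam^2 * (l0 (c (ψ k + 1) j):ℝ) + lam^2 * RR c (ψ k) j
            ≤ Gv Y lam c d (ψ k) (j:ℕ) := by
          intro k
          rw [Gv_decomp1 Y lam c d (ψ k) j]
          have h := haB (ψ k) j (c (ψ k) j) (fun i => hcL (ψ k) j i)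
          linarith
        have hT2 : Tendsto (fun k => frobSq (EjE Y c d (ψ k) j
              - outer (d (ψ k) j) (c (ψ k + 1) j))
              + lam^2 * (l0 (c (ψ k + 1) j):ℝ) + lam^2 * RR c (ψ k) j) atTop
            (nhds (frobSq (Es - outer (Dstar j) (C' j)) + lam^2 * (l0 (C' j):ℝ)
              + lam^2 * Rst)) := by
          have hfr := hfrob (fun k => d (ψ k) j) (fun k => c (ψ k + 1) j) (Dstar j) (C' j)
            (hds j) (hcs' j)
          exact (hfr.add (hlam2l0 _ _ hl0c')).add hRRlim
        have hT2f : frobSq (Es - outer (Dstar j) (C' j)) + lam^2 * (l0 (C' j):ℝ)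
            + lam^2 * Rst = finf := by
          refine tendsto_nhds_unique hT2
            (tendsto_of_tendsto_of_tendsto_of_le_of_le
              (hT3f ▸ hT3) (hT1f ▸ hT1) hM_ge hM_le)
        have hv12 : frobSq (Es - outer (Dstar j) (Cstar j)) + lam^2 * (l0 (Cstar j):ℝ)
            = frobSq (Es - outer (Dstar j) (C' j)) + lam^2 * (l0 (C' j):ℝ) := by
          linarith
        have hv32 : frobSq (Es - outer (D' j) (C' j))
            = frobSq (Es - outer (Dstar j) (C' j)) := by
          linarith
        -- limit of the sparse coding optimality
        have hF3 : ∀ cc : Fin N → ℝ, (∀ i, |cc i| ≤ L) →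
            frobSq (Es - outer (Dstar j) (C' j)) + lam^2 * (l0 (C' j):ℝ)
              ≤ frobSq (Es - outer (Dstar j) cc) + lam^2 * (l0 cc:ℝ) := by
          intro cc hcc
          have hconst2 : Tendsto (fun _ : ℕ => lam^2 * (l0 cc:ℝ)) atTop
              (nhds (lam^2 * (l0 cc:ℝ))) := tendsto_const_nhds
          have hlhs := (hfrob (fun k => d (ψ k) j) (fun k => c (ψ k + 1) j) (Dstar j) (C' j)
            (hds j) (hcs' j)).add (hlam2l0 _ _ hl0c')
          have hrhs := (hfrob (fun k => d (ψ k) j) (fun _ => cc) (Dstar j) cc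
            (hds j) (fun i => tendsto_const_nhds)).add hconst2
          exact le_of_tendsto_of_tendsto' hlhs hrhs (fun k => haB (ψ k) j cc hcc)
        -- limit of the dictionary optimality
        have hF5 : ∀ dd : Fin n → ℝ, (∑ p, (dd p)^2) = 1 →
            frobSq (Es - outer (D' j) (C' j)) ≤ frobSq (Es - outer dd (C' j)) := by
          intro dd hdd
          have hlhs := hfrob (fun k => d (ψ k + 1) j) (fun k => c (ψ k + 1) j) (D' j) (C' j)
            (hds' j) (hcs' j)
          have hrhs := hfrob (fun _ => dd) (fun k => c (ψ k + 1) j) dd (C' j)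
            (fun p => tendsto_const_nhds) (hcs' j)
          exact le_of_tendsto_of_tendsto' hlhs hrhs (fun k => hbB (ψ k) j dd hdd)
        -- coordinatewise analysis
        have hq' : ∀ i s, |s| ≤ L → qf lam (bv i) (C' j i) ≤ qf lam (bv i) s := by
          apply coord_min_of_min lam L bv (C' j) (hC'L j)
          intro cc hcc
          have h := hF3 cc hcc
          rw [val_eq lam Es (Dstar j) (C' j) (hDsum j),
            val_eq lam Es (Dstar j) cc (hDsum j), ← hbv] at h
          linarith
        have hC'th : ∀ i, C' j i = thresh lam L (bv i) := fun i =>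
          min_eq_thresh lam L (bv i) (C' j i) hlam hL (hbne i) (hC'L j i)
            (fun s hs => hq' i s hs)
        have hsum_eq : ∑ i, qf lam (bv i) (Cstar j i) = ∑ i, qf lam (bv i) (C' j i) := by
          have h := hv12
          rw [val_eq lam Es (Dstar j) (Cstar j) (hDsum j),
            val_eq lam Es (Dstar j) (C' j) (hDsum j), ← hbv] at h
          linarith
        have hterm_eq : ∀ i, qf lam (bv i) (C' j i) = qf lam (bv i) (Cstar j i) := by
          have h := (Finset.sum_eq_sum_iff_of_le
            (fun i _ => hq' i (Cstar j i) (hCstarL j i))).mp hsum_eq.symm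
          intro i
          exact h i (Finset.mem_univ i)
        have hCsth : ∀ i, Cstar j i = thresh lam L (bv i) := by
          intro i
          refine min_eq_thresh lam L (bv i) (Cstar j i) hlam hL (hbne i) (hCstarL j i) ?_
          intro s hs
          rw [← hterm_eq i]
          exact hq' i s hs
        have hCeq : C' j = Cstar j := funext fun i => (hC'th i).trans (hCsth i).symm
        -- d-part
        have hF5' : ∀ dd : Fin n → ℝ, (∑ p, (dd p)^2) = 1 →
            frobSq (Es - outer (Dstar j) (Cstar j)) ≤ frobSq (Es - outer dd (Cstar j)) := by
          intro dd hdd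
          have h := hF5 dd hdd
          rw [hCeq] at h
          have h2 := hv32
          rw [hCeq] at h2
          linarith
        -- f-form conclusions
        have hfCD : f Cstar Dstar = frobSq (Es - outer (Dstar j) (Cstar j))
            + lam^2 * (l0 (Cstar j):ℝ) + lam^2 * Rst := by
          rw [hf]
          exact f_decomp Y lam Cstar Dstar j
        have hfupdC : ∀ cc : Fin N → ℝ, f (Function.update Cstar j cc) Dstar
            = frobSq (Es - outer (Dstar j) cc) + lam^2 * (l0 cc:ℝ) + lam^2 * Rst := by
          intro cc
          rw [hf]
          have h := hybrid_decomp Y lam Cstar Dstar j cc (Dstar j)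
          rw [Function.update_eq_self j Dstar] at h
          exact h
        have hfupdD : ∀ dd : Fin n → ℝ, f Cstar (Function.update Dstar j dd)
            = frobSq (Es - outer dd (Cstar j)) + lam^2 * (l0 (Cstar j):ℝ) + lam^2 * Rst := by
          intro dd
          rw [hf]
          have h := hybrid_decomp Y lam Cstar Dstar j (Cstar j) dd
          rw [Function.update_eq_self j Cstar] at h
          exact h
        have concl_c : ∀ cc : Fin N → ℝ, (∀ i, |cc i| ≤ L) →
            f Cstar Dstar ≤ f (Function.update Cstar j cc) Dstar := by
          intro cc hcc
          rw [hfCD, hfupdC]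
          have h1 := hF3 cc hcc
          linarith
        have concl_d : ∀ dd : Fin n → ℝ, (∑ i, (dd i)^2) = 1 →
            f Cstar Dstar ≤ f Cstar (Function.update Dstar j dd) := by
          intro dd hdd
          rw [hfCD, hfupdD]
          have h1 := hF5' dd hdd
          linarith
        -- invariant for column j
        by_cases hc0 : Cstar j = 0
        · have houter : outer (D' j) (C' j) = outer (Dstar j) (Cstar j) := by
            rw [hCeq, hc0]
            ext p i
            simp [outer]
          exact ⟨⟨hCeq, houter⟩, concl_c, concl_d⟩
        · obtain ⟨i0, hi0⟩ := Function.ne_iff.mp hc0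
          have hpos : 0 < ∑ i, Cstar j i * bv i := by
            apply Finset.sum_pos'
            · intro i _
              rw [hCsth i]
              exact thresh_mul_nonneg lam L (bv i) hlam hL
            · refine ⟨i0, Finset.mem_univ i0, ?_⟩
              rw [hCsth i0]
              refine thresh_mul_pos lam L (bv i0) hlam hL ?_
              rw [← hCsth i0]
              simpa using hi0
          have hvne : Es.mulVec (Cstar j) ≠ 0 := by
            intro hv0
            have hswap := dot_swap Es (Dstar j) (Cstar j)
            rw [hv0] at hswap
            rw [← hbv] at hswap
            simp only [Pi.zero_apply, mul_zero, Finset.sum_const_zero] at hswap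
            linarith
          have hDmin' : ∀ dd : Fin n → ℝ, (∑ p, (dd p)^2) = 1 →
              frobSq (Es - outer (D' j) (Cstar j)) ≤ frobSq (Es - outer dd (Cstar j)) := by
            intro dd hdd
            have h := hF5 dd hdd
            rwa [hCeq] at h
          have h1 := dmin_unique Es (Cstar j) hvne (D' j) (hD'sum j) hDmin'
          have h2 := dmin_unique Es (Cstar j) hvne (Dstar j) (hDsum j) hF5'
          have hDeq : D' j = Dstar j := h1.trans h2.symm
          refine ⟨⟨hCeq, ?_⟩, concl_c, concl_d⟩
          rw [hCeq, hDeq]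
  intro j
  obtain ⟨hinv, hc, hd2⟩ := main ((j:ℕ)+1) j (Nat.lt_succ_self _)
  exact ⟨⟨fun i => hCstarL j i, hc⟩,
    ⟨Real.sqrt_eq_one.mpr (hDsum j), fun dd hdd => hd2 dd (Real.sqrt_eq_one.mp hdd)⟩⟩
end
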